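/- arXiv:1904.02525 — 7 statements merged into one kernel-verified Lean document; each statement's English description precedes it below -/
import Mathlib

section
/- Let n ≥ 2 and let e_1, …, e_n be the standard basis of ℝ^n. Consider the simple roots of type D_n, namely δ_i = e_i − e_{i+1} for 1 ≤ i ≤ n−1 and δ_n = e_{n−1} + e_n. For every a = (a_1, …, a_n) ∈ ℝ^n the following are equivalent: (1) a is a linear combination of δ_1, …, δ_n with nonnegative real coefficients; (2) Σ_{i=1}^{k} a_i ≥ 0 for every 1 ≤ k ≤ n−2, and Σ_{i=1}^{n−1} a_i ≥ a_n, and Σ_{i=1}^{n−1} a_i ≥ −a_n. -/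
lemma sum_Iic_single {m : ℕ} (j k : Fin m) (c : ℝ) :
    ∑ i ∈ Finset.Iic k, Pi.single j c i = if j ≤ k then c else 0 := by
  rw [Finset.sum_pi_single']; simp [Finset.mem_Iic]

lemma Iic_succ {m : ℕ} (j : Fin m) :
    Finset.Iic j.succ = insert j.succ (Finset.Iic j.castSucc) := by
  ext i
  simp only [Finset.mem_Iic, Finset.mem_insert, Fin.le_def, Fin.ext_iff,
    Fin.coe_castSucc, Fin.val_succ]
  omega

lemma ext_of_sum_Iic {m : ℕ} (v w : Fin (m+1) → ℝ)
    (h : ∀ k, ∑ i ∈ Finset.Iic k, v i = ∑ i ∈ Finset.Iic k, w i) : v = w := by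
  funext j
  induction j using Fin.induction with
  | zero =>
    have h0 := h 0
    have e : Finset.Iic (0 : Fin (m+1)) = {0} := by
      ext i; simp [Finset.mem_Iic, Fin.le_zero_iff]
    rw [e] at h0; simpa using h0
  | succ j ih =>
    have h1 := h j.succ
    have h2 := h j.castSucc
    rw [Iic_succ, Finset.sum_insert (by simp), Finset.sum_insert (by simp [Finset.mem_Iic, Fin.le_def])] at h1
    linarith

lemma sumF (n : ℕ) (x : Fin (n+1) → ℝ) (y : ℝ) (k : Fin (n+2)) :
    ∑ i ∈ Finset.Iic k,
      ((∑ j : Fin (n + 1),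
          x j • (Pi.single j.castSucc (1 : ℝ) - Pi.single j.succ (1 : ℝ)))
        + y • ((Pi.single (Fin.last n).castSucc (1 : ℝ) : Fin (n + 2) → ℝ)
          + (Pi.single (Fin.last (n + 1)) (1 : ℝ) : Fin (n + 2) → ℝ))) i
    = (∑ j : Fin (n+1), if (j : ℕ) = (k : ℕ) then x j else 0)
      + (if n ≤ (k : ℕ) then y else 0) + (if n + 1 ≤ (k : ℕ) then y else 0) := by
  simp only [Pi.add_apply, Finset.sum_apply, Pi.smul_apply, Pi.sub_apply, smul_eq_mul]
  rw [Finset.sum_add_distrib, Finset.sum_comm]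
  conv_rhs => rw [add_assoc]
  congr 1
  · refine Finset.sum_congr rfl fun j _ => ?_
    rw [← Finset.mul_sum, Finset.sum_sub_distrib, sum_Iic_single, sum_Iic_single]
    simp only [Fin.le_def, Fin.coe_castSucc, Fin.val_succ]
    rcases lt_trichotomy (j : ℕ) (k : ℕ) with h | h | h
    · rw [if_pos h.le, if_pos (by omega), if_neg (by omega)]; ring
    · rw [if_pos h.le, if_neg (by omega), if_pos h]; ring
    · rw [if_neg (by omega), if_neg (by omega), if_neg (by omega)]; ring
  · simp only [mul_add]
    rw [Finset.sum_add_distrib, ← Finset.mul_sum, ← Finset.mul_sum,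
      sum_Iic_single, sum_Iic_single]
    simp only [Fin.le_def, Fin.coe_castSucc, Fin.val_last, mul_ite, mul_one, mul_zero]

lemma sum_ite_val {n : ℕ} (x : Fin (n+1) → ℝ) (k : Fin (n+2)) :
    (∑ j : Fin (n+1), if (j : ℕ) = (k : ℕ) then x j else 0) =
      if h : (k : ℕ) < n + 1 then x ⟨k, h⟩ else 0 := by
  split_ifs with h
  · have e : ∀ j : Fin (n+1), ((j : ℕ) = (k : ℕ)) = (j = ⟨k, h⟩) := fun j => by
      simp [Fin.ext_iff]
    simp only [e]
    simp
  · apply Finset.sum_eq_zero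
    intro j _
    rw [if_neg (by omega)]

/-- Type-D criterion for the order on Langlands parameters.
The ambient dimension is `n + 2` (so dimension ≥ 2).  The simple roots of type `D_{n+2}`
are `δ_i = e_i - e_{i+1}` for `i : Fin (n+1)` together with `δ_last = e_{n} + e_{n+1}`
(the last two basis vectors).  For `a : Fin (n+2) → ℝ`, being a nonnegative combination of
these simple roots is equivalent to: all partial sums of length `1, …, n` are nonnegative,
and the sum of the first `n+1` entries is `≥ a_last` and `≥ -a_last`. -/
theorem statement2 (n : ℕ) (a : Fin (n + 2) → ℝ) :
    (∃ (x : Fin (n + 1) → ℝ) (y : ℝ), (∀ i, 0 ≤ x i) ∧ 0 ≤ y ∧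
        a = (∑ i : Fin (n + 1),
              x i • (Pi.single i.castSucc (1 : ℝ) - Pi.single i.succ (1 : ℝ)))
            + y • ((Pi.single (Fin.last n).castSucc (1 : ℝ) : Fin (n + 2) → ℝ)
              + (Pi.single (Fin.last (n + 1)) (1 : ℝ) : Fin (n + 2) → ℝ))) ↔
    ((∀ k : Fin n, 0 ≤ ∑ i ∈ Finset.Iic k.castSucc.castSucc, a i) ∧
      a (Fin.last (n + 1)) ≤ ∑ i ∈ Finset.Iic (Fin.last n).castSucc, a i ∧
      -a (Fin.last (n + 1)) ≤ ∑ i ∈ Finset.Iic (Fin.last n).castSucc, a i) := by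
  constructor
  · rintro ⟨x, y, hx, hy, rfl⟩
    have key : ∀ k : Fin (n+2), ∑ i ∈ Finset.Iic k, _ = _ := fun k => sumF n x y k
    have hSpred : ∑ i ∈ Finset.Iic (Fin.last n).castSucc,
        ((∑ j : Fin (n + 1),
            x j • (Pi.single j.castSucc (1 : ℝ) - Pi.single j.succ (1 : ℝ)))
          + y • ((Pi.single (Fin.last n).castSucc (1 : ℝ) : Fin (n + 2) → ℝ)
            + (Pi.single (Fin.last (n + 1)) (1 : ℝ) : Fin (n + 2) → ℝ))) i
        = x (Fin.last n) + y := by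
      rw [sumF, sum_ite_val]
      simp only [Fin.coe_castSucc, Fin.val_last]
      rw [dif_pos (by omega), if_pos le_rfl, if_neg (by omega)]
      have : (⟨n, by omega⟩ : Fin (n+1)) = Fin.last n := rfl
      rw [this]; ring
    have hlast :
        ((∑ j : Fin (n + 1),
            x j • (Pi.single j.castSucc (1 : ℝ) - Pi.single j.succ (1 : ℝ)))
          + y • ((Pi.single (Fin.last n).castSucc (1 : ℝ) : Fin (n + 2) → ℝ)
            + (Pi.single (Fin.last (n + 1)) (1 : ℝ) : Fin (n + 2) → ℝ)))
          (Fin.last (n + 1)) = y - x (Fin.last n) := by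
      have h1 := sumF n x y (Fin.last (n+1))
      have e : Fin.last (n+1) = (Fin.last n).succ := rfl
      rw [e, Iic_succ, Finset.sum_insert (by simp [Finset.mem_Iic, Fin.le_def])] at h1
      rw [← e] at h1
      rw [hSpred] at h1
      rw [sum_ite_val] at h1
      simp only [Fin.val_last] at h1
      rw [dif_neg (by omega), if_pos (by omega), if_pos (by omega)] at h1
      linarith
    refine ⟨fun k => ?_, ?_, ?_⟩
    · rw [sumF, sum_ite_val]
      simp only [Fin.coe_castSucc]
      rw [dif_pos (by omega), if_neg (by omega), if_neg (by omega)]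
      have := hx ⟨(k : ℕ), by omega⟩
      linarith
    · rw [hSpred, hlast]
      have := hx (Fin.last n); linarith
    · rw [hSpred, hlast]; linarith
  · rintro ⟨h1, h2, h3⟩
    set Sn : ℝ := ∑ i ∈ Finset.Iic (Fin.last n).castSucc, a i with hSn
    set al : ℝ := a (Fin.last (n + 1)) with hal
    refine ⟨fun j => if h : (j : ℕ) < n then ∑ i ∈ Finset.Iic j.castSucc, a i
        else (Sn - al) / 2, (Sn + al) / 2, fun j => ?_, by linarith, ?_⟩
    · dsimp only
      split_ifs with h
      · have := h1 ⟨(j : ℕ), h⟩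
        have e : ((⟨(j : ℕ), h⟩ : Fin n)).castSucc.castSucc = j.castSucc := by
          ext; simp
        rwa [e] at this
      · linarith
    · refine (ext_of_sum_Iic a _ fun k => ?_).symm.symm
      rw [sumF, sum_ite_val]
      rcases lt_trichotomy (k : ℕ) n with hk | hk | hk
      · rw [dif_pos (by omega), if_neg (by omega), if_neg (by omega)]
        rw [dif_pos (show ((k : ℕ) : ℕ) < n from hk)]
        have e : ((⟨(k : ℕ), by omega⟩ : Fin (n+1))).castSucc = k := by ext; simp
        rw [e]; ring
      · rw [dif_pos (by omega), if_pos (by omega), if_neg (by omega)]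
        rw [dif_neg (show ¬ ((k : ℕ) : ℕ) < n by omega)]
        have e : ((Fin.last n).castSucc : Fin (n+2)) = k := by
          ext; simp [hk]
        rw [hSn, e]; ring
      · have hk2 : (k : ℕ) = n + 1 := by omega
        have e : k = Fin.last (n + 1) := by ext; simp [hk2]
        rw [dif_neg (by omega), if_pos (by omega), if_pos (by omega)]
        subst e
        have e2 : Fin.last (n+1) = (Fin.last n).succ := rfl
        rw [e2, Iic_succ, Finset.sum_insert (by simp [Finset.mem_Iic, Fin.le_def]), ← e2, ← hSn, ← hal]
        ring
end

section
/- Let 𝔞_1, 𝔟_1, 𝔞_2, 𝔟_2 ∈ ℝ with 𝔞_1 − 𝔟_1 ∈ ℕ, 𝔞_2 − 𝔟_2 ∈ ℕ, 𝔞_1 − 𝔞_2 ∈ ℤ, and 𝔞_1 > 𝔞_2 > 𝔟_1 > 𝔟_2 (so the two linear segments (𝔞_1, …, 𝔟_1) and (𝔞_2, …, 𝔟_2) are linked). Set N = (𝔞_1 − 𝔟_1 + 1) + (𝔞_2 − 𝔟_2 + 1). Let λ ∈ ℝ^N be the concatenation of the constant block of value (𝔞_1+𝔟_1)/2 and length 𝔞_1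 − 𝔟_1 + 1 with the constant block of value (𝔞_2+𝔟_2)/2 and length 𝔞_2 − 𝔟_2 + 1. Let λ′ ∈ ℝ^N be the concatenation of the constant blocks of value (𝔞_1+𝔟_2)/2 (length 𝔞_1 − 𝔟_2 + 1) and of value (𝔞_2+𝔟_1)/2 (length 𝔞_2 − 𝔟_1 + 1), arranged so that the block of larger (or equal) value comes first. Then λ′ ≤_P λ: the total sums of λ and λ′ agree and Σ_{i=1}^{k} (λ_i − λ′_i) ≥ 0 for every 1 ≤ k ≤ N. In other words, replacing two linked segments by their union (𝔞_1, …, 𝔟_2) and intersection (𝔞_2, …, 𝔟_1) yields a smaller Langlands parameter. -/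
private lemma sum_if_lt (n t : ℕ) (x y : ℝ) :
    ∑ j ∈ Finset.range n, (if j < t then x else y)
      = ((min n t : ℕ) : ℝ) * x + ((n - min n t : ℕ) : ℝ) * y := by
  induction n with
  | zero => simp
  | succ n ih =>
    rw [Finset.sum_range_succ, ih]
    by_cases h : n < t
    · rw [if_pos h, show min (n+1) t = min n t + 1 by omega,
        show (n+1) - (min n t + 1) = n - min n t by omega]
      push_cast; ring
    · rw [if_neg h, show min (n+1) t = min n t by omega,
        show (n+1) - min n t = (n - min n t) + 1 by omega]
      push_cast; ring

private lemma sum_piece (t₁ t₂ n : ℕ) (A B P Q : ℝ) :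
    ∑ j ∈ Finset.range n, ((if j < t₁ then A else B) - (if j < t₂ then P else Q))
      = ((min n t₁ : ℕ) : ℝ) * A + ((n - min n t₁ : ℕ) : ℝ) * B
        - ((min n t₂ : ℕ) : ℝ) * P - ((n - min n t₂ : ℕ) : ℝ) * Q := by
  rw [Finset.sum_sub_distrib, sum_if_lt, sum_if_lt]; ring

private lemma sum_Iic_fin {N : ℕ} (k : Fin (d₁ + c + 1 + (c + d₂ + 1))) (H : ℕ → ℝ) :
    ∑ i ∈ Finset.Iic k, H i.val = ∑ j ∈ Finset.range (k.val + 1), H j := by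
  calc ∑ i ∈ Finset.Iic k, H i.val
      = ∑ m ∈ (Finset.Iic k).map Fin.valEmbedding, H m :=
        (Finset.sum_map (Finset.Iic k) Fin.valEmbedding H).symm
    _ = ∑ m ∈ Finset.Iic (k : ℕ), H m := by rw [Fin.map_valEmbedding_Iic]
    _ = ∑ j ∈ Finset.range (k.val + 1), H j := by
        congr 1; ext j; simp [Nat.lt_succ_iff]

set_option maxHeartbeats 1000000 in
/-- Taking union and intersection of two linked segments yields a smaller
Langlands parameter.  The reals satisfy `a₁ = a₂ + d₁`, `a₂ = b₁ + c`, `b₁ = b₂ + d₂` with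
`d₁, d₂, c ≥ 1` naturals; this encodes `a₁ > a₂ > b₁ > b₂` with `a₁ - b₁ ∈ ℕ`,
`a₂ - b₂ ∈ ℕ` and `a₁ - a₂ ∈ ℤ` (linked segments).  Then
`N = (a₁ - b₁ + 1) + (a₂ - b₂ + 1) = (d₁ + c + 1) + (c + d₂ + 1)`.  The vector `lam` is
the concatenation of the constant blocks of value `(a₁+b₁)/2` (length `d₁+c+1`) and
`(a₂+b₂)/2` (length `c+d₂+1`); `lam'` is the concatenation of the blocks of value
`(a₁+b₂)/2` (length `a₁-b₂+1 = d₁+c+d₂+1`, the union) and `(a₂+b₁)/2` (length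
`a₂-b₁+1 = c+1`, the intersection), the block of larger (or equal) value first.
Then `lam' ≤_P lam`. -/
theorem statement4 (a₁ b₁ a₂ b₂ : ℝ) (d₁ d₂ c : ℕ)
    (hd₁ : 1 ≤ d₁) (hd₂ : 1 ≤ d₂) (hc : 1 ≤ c)
    (h₁ : a₁ = a₂ + d₁) (h₂ : a₂ = b₁ + c) (h₃ : b₁ = b₂ + d₂)
    (lam lam' : Fin (d₁ + c + 1 + (c + d₂ + 1)) → ℝ)
    (hlam : ∀ i : Fin (d₁ + c + 1 + (c + d₂ + 1)),
      lam i = if (i : ℕ) < d₁ + c + 1 then (a₁ + b₁) / 2 else (a₂ + b₂) / 2)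
    (hlam' : ∀ i : Fin (d₁ + c + 1 + (c + d₂ + 1)),
      lam' i =
        if (a₂ + b₁) / 2 ≤ (a₁ + b₂) / 2 then
          (if (i : ℕ) < d₁ + c + d₂ + 1 then (a₁ + b₂) / 2 else (a₂ + b₁) / 2)
        else
          (if (i : ℕ) < c + 1 then (a₂ + b₁) / 2 else (a₁ + b₂) / 2)) :
    (∑ i, lam i = ∑ i, lam' i) ∧
    ∀ k : Fin (d₁ + c + 1 + (c + d₂ + 1)),
      0 ≤ ∑ i ∈ Finset.Iic k, (lam i - lam' i) := by
  subst h₁ h₂ h₃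
  by_cases hcase : d₂ ≤ d₁
  · -- union (longer) block first
    have hcof : ((d₂ : ℝ)) ≤ d₁ := Nat.cast_le.mpr hcase
    have hcond : (b₂ + ↑d₂ + ↑c + (b₂ + ↑d₂)) / 2 ≤ (b₂ + ↑d₂ + ↑c + ↑d₁ + b₂) / 2 := by
      linarith
    have hdiff : ∀ i : Fin (d₁ + c + 1 + (c + d₂ + 1)), lam i - lam' i =
        (if (i : ℕ) < d₁ + c + 1 then (b₂ + ↑d₂ + ↑c + ↑d₁ + (b₂ + ↑d₂)) / 2
            else (b₂ + ↑d₂ + ↑c + b₂) / 2)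
          - (if (i : ℕ) < d₁ + c + d₂ + 1 then (b₂ + ↑d₂ + ↑c + ↑d₁ + b₂) / 2
            else (b₂ + ↑d₂ + ↑c + (b₂ + ↑d₂)) / 2) := by
      intro i
      rw [hlam i, hlam' i, if_pos hcond]
    constructor
    · rw [← sub_eq_zero, ← Finset.sum_sub_distrib]
      have h2 : ∑ i : Fin (d₁ + c + 1 + (c + d₂ + 1)), (lam i - lam' i)
          = ∑ j ∈ Finset.range (d₁ + c + 1 + (c + d₂ + 1)),
            ((if j < d₁ + c + 1 then (b₂ + ↑d₂ + ↑c + ↑d₁ + (b₂ + ↑d₂)) / 2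
                else (b₂ + ↑d₂ + ↑c + b₂) / 2)
              - (if j < d₁ + c + d₂ + 1 then (b₂ + ↑d₂ + ↑c + ↑d₁ + b₂) / 2
                else (b₂ + ↑d₂ + ↑c + (b₂ + ↑d₂)) / 2)) :=
        (Finset.sum_congr rfl fun i _ => hdiff i).trans
          (Fin.sum_univ_eq_sum_range (fun j : ℕ => (if j < d₁ + c + 1 then (b₂ + ↑d₂ + ↑c + ↑d₁ + (b₂ + ↑d₂)) / 2 else (b₂ + ↑d₂ + ↑c + b₂) / 2) - (if j < d₁ + c + d₂ + 1 then (b₂ + ↑d₂ + ↑c + ↑d₁ + b₂) / 2 else (b₂ + ↑d₂ + ↑c + (b₂ + ↑d₂)) / 2)) _)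
      rw [h2, sum_piece,
        show min (d₁ + c + 1 + (c + d₂ + 1)) (d₁ + c + 1) = d₁ + c + 1 by omega,
        show d₁ + c + 1 + (c + d₂ + 1) - (d₁ + c + 1) = c + d₂ + 1 by omega,
        show min (d₁ + c + 1 + (c + d₂ + 1)) (d₁ + c + d₂ + 1) = d₁ + c + d₂ + 1 by omega,
        show d₁ + c + 1 + (c + d₂ + 1) - (d₁ + c + d₂ + 1) = c + 1 by omega]
      push_cast; ring
    · intro k
      have h2 : ∑ i ∈ Finset.Iic k, (lam i - lam' i)
          = ∑ j ∈ Finset.range ((k : ℕ) + 1),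
            ((if j < d₁ + c + 1 then (b₂ + ↑d₂ + ↑c + ↑d₁ + (b₂ + ↑d₂)) / 2
                else (b₂ + ↑d₂ + ↑c + b₂) / 2)
              - (if j < d₁ + c + d₂ + 1 then (b₂ + ↑d₂ + ↑c + ↑d₁ + b₂) / 2
                else (b₂ + ↑d₂ + ↑c + (b₂ + ↑d₂)) / 2)) :=
        (Finset.sum_congr rfl fun i _ => hdiff i).trans (sum_Iic_fin (N := d₁ + c + 1 + (c + d₂ + 1)) k (fun j : ℕ => (if j < d₁ + c + 1 then (b₂ + ↑d₂ + ↑c + ↑d₁ + (b₂ + ↑d₂)) / 2 else (b₂ + ↑d₂ + ↑c + b₂) / 2) - (if j < d₁ + c + d₂ + 1 then (b₂ + ↑d₂ + ↑c + ↑d₁ + b₂) / 2 else (b₂ + ↑d₂ + ↑c + (b₂ + ↑d₂)) / 2)))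
      rw [h2, sum_piece]
      have hkN : (k : ℕ) < d₁ + c + 1 + (c + d₂ + 1) := k.isLt
      obtain ⟨n, hn⟩ : ∃ m, m = (k : ℕ) + 1 := ⟨_, rfl⟩
      rw [← hn]
      have hd10 : (0:ℝ) ≤ d₁ := by positivity
      have hd20 : (0:ℝ) ≤ d₂ := by positivity
      have hc0 : (0:ℝ) ≤ c := by positivity
      have hn0 : (0:ℝ) ≤ n := by positivity
      have hnN : (n : ℝ) ≤ ↑d₁ + ↑c + 1 + (↑c + ↑d₂ + 1) := by
        exact_mod_cast (show n ≤ d₁ + c + 1 + (c + d₂ + 1) by omega)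
      rcases le_or_gt n (d₁ + c + 1) with h | h
      · rw [show min n (d₁ + c + 1) = n by omega,
          show min n (d₁ + c + d₂ + 1) = n by omega,
          show n - n = 0 by omega]
        clear hlam hlam' hdiff h2 hcond lam lam'
        push_cast
        nlinarith [mul_nonneg hn0 hd20]
      · have hb : (↑d₁ + ↑c + 1 : ℝ) < n := by exact_mod_cast h
        rcases le_or_gt n (d₁ + c + d₂ + 1) with h' | h'
        · have hb' : (n : ℝ) ≤ ↑d₁ + ↑c + ↑d₂ + 1 := by exact_mod_cast h'
          rw [show min n (d₁ + c + 1) = d₁ + c + 1 by omega,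
            show min n (d₁ + c + d₂ + 1) = n by omega,
            show n - n = 0 by omega,
            show ((n - (d₁ + c + 1) : ℕ) : ℝ) = ↑n - (↑d₁ + ↑c + 1) by
              push_cast [Nat.cast_sub (show d₁ + c + 1 ≤ n by omega)]; ring]
          clear hlam hlam' hdiff h2 hcond lam lam'
          push_cast
          nlinarith [mul_nonneg (by linarith : (0:ℝ) ≤ ↑d₁ + ↑c + ↑d₂ + 1 - ↑n) hd10,
            mul_nonneg hd20 hc0]
        · have hb' : (↑d₁ + ↑c + ↑d₂ + 1 : ℝ) < n := by exact_mod_cast h'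
          rw [show min n (d₁ + c + 1) = d₁ + c + 1 by omega,
            show min n (d₁ + c + d₂ + 1) = d₁ + c + d₂ + 1 by omega,
            show ((n - (d₁ + c + 1) : ℕ) : ℝ) = ↑n - (↑d₁ + ↑c + 1) by
              push_cast [Nat.cast_sub (show d₁ + c + 1 ≤ n by omega)]; ring,
            show ((n - (d₁ + c + d₂ + 1) : ℕ) : ℝ) = ↑n - (↑d₁ + ↑c + ↑d₂ + 1) by
              push_cast [Nat.cast_sub (show d₁ + c + d₂ + 1 ≤ n by omega)]; ring]
          clear hlam hlam' hdiff h2 hcond lam lam'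
          push_cast
          nlinarith [mul_nonneg hd20 (by linarith : (0:ℝ) ≤ ↑d₁ + ↑c + 1 + (↑c + ↑d₂ + 1) - ↑n)]
  · -- intersection (shorter) block first
    have hcof : ((d₁ : ℝ)) < d₂ := by exact_mod_cast Nat.lt_of_not_le hcase
    have hcond : ¬ ((b₂ + ↑d₂ + ↑c + (b₂ + ↑d₂)) / 2 ≤ (b₂ + ↑d₂ + ↑c + ↑d₁ + b₂) / 2) := by
      push_neg; linarith
    have hdiff : ∀ i : Fin (d₁ + c + 1 + (c + d₂ + 1)), lam i - lam' i =
        (if (i : ℕ) < d₁ + c + 1 then (b₂ + ↑d₂ + ↑c + ↑d₁ + (b₂ + ↑d₂)) / 2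
            else (b₂ + ↑d₂ + ↑c + b₂) / 2)
          - (if (i : ℕ) < c + 1 then (b₂ + ↑d₂ + ↑c + (b₂ + ↑d₂)) / 2
            else (b₂ + ↑d₂ + ↑c + ↑d₁ + b₂) / 2) := by
      intro i
      rw [hlam i, hlam' i, if_neg hcond]
    constructor
    · rw [← sub_eq_zero, ← Finset.sum_sub_distrib]
      have h2 : ∑ i : Fin (d₁ + c + 1 + (c + d₂ + 1)), (lam i - lam' i)
          = ∑ j ∈ Finset.range (d₁ + c + 1 + (c + d₂ + 1)),
            ((if j < d₁ + c + 1 then (b₂ + ↑d₂ + ↑c + ↑d₁ + (b₂ + ↑d₂)) / 2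
                else (b₂ + ↑d₂ + ↑c + b₂) / 2)
              - (if j < c + 1 then (b₂ + ↑d₂ + ↑c + (b₂ + ↑d₂)) / 2
                else (b₂ + ↑d₂ + ↑c + ↑d₁ + b₂) / 2)) :=
        (Finset.sum_congr rfl fun i _ => hdiff i).trans
          (Fin.sum_univ_eq_sum_range (fun j : ℕ => (if j < d₁ + c + 1 then (b₂ + ↑d₂ + ↑c + ↑d₁ + (b₂ + ↑d₂)) / 2 else (b₂ + ↑d₂ + ↑c + b₂) / 2) - (if j < c + 1 then (b₂ + ↑d₂ + ↑c + (b₂ + ↑d₂)) / 2 else (b₂ + ↑d₂ + ↑c + ↑d₁ + b₂) / 2)) _)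
      rw [h2, sum_piece,
        show min (d₁ + c + 1 + (c + d₂ + 1)) (d₁ + c + 1) = d₁ + c + 1 by omega,
        show d₁ + c + 1 + (c + d₂ + 1) - (d₁ + c + 1) = c + d₂ + 1 by omega,
        show min (d₁ + c + 1 + (c + d₂ + 1)) (c + 1) = c + 1 by omega,
        show d₁ + c + 1 + (c + d₂ + 1) - (c + 1) = d₁ + c + d₂ + 1 by omega]
      push_cast; ring
    · intro k
      have h2 : ∑ i ∈ Finset.Iic k, (lam i - lam' i)
          = ∑ j ∈ Finset.range ((k : ℕ) + 1),
            ((if j < d₁ + c + 1 then (b₂ + ↑d₂ + ↑c + ↑d₁ + (b₂ + ↑d₂)) / 2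
                else (b₂ + ↑d₂ + ↑c + b₂) / 2)
              - (if j < c + 1 then (b₂ + ↑d₂ + ↑c + (b₂ + ↑d₂)) / 2
                else (b₂ + ↑d₂ + ↑c + ↑d₁ + b₂) / 2)) :=
        (Finset.sum_congr rfl fun i _ => hdiff i).trans (sum_Iic_fin (N := d₁ + c + 1 + (c + d₂ + 1)) k (fun j : ℕ => (if j < d₁ + c + 1 then (b₂ + ↑d₂ + ↑c + ↑d₁ + (b₂ + ↑d₂)) / 2 else (b₂ + ↑d₂ + ↑c + b₂) / 2) - (if j < c + 1 then (b₂ + ↑d₂ + ↑c + (b₂ + ↑d₂)) / 2 else (b₂ + ↑d₂ + ↑c + ↑d₁ + b₂) / 2)))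
      rw [h2, sum_piece]
      have hkN : (k : ℕ) < d₁ + c + 1 + (c + d₂ + 1) := k.isLt
      obtain ⟨n, hn⟩ : ∃ m, m = (k : ℕ) + 1 := ⟨_, rfl⟩
      rw [← hn]
      have hd10 : (0:ℝ) ≤ d₁ := by positivity
      have hd20 : (0:ℝ) ≤ d₂ := by positivity
      have hc0 : (0:ℝ) ≤ c := by positivity
      have hn0 : (0:ℝ) ≤ n := by positivity
      have hnN : (n : ℝ) ≤ ↑d₁ + ↑c + 1 + (↑c + ↑d₂ + 1) := by
        exact_mod_cast (show n ≤ d₁ + c + 1 + (c + d₂ + 1) by omega)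
      rcases le_or_gt n (c + 1) with h | h
      · rw [show min n (d₁ + c + 1) = n by omega,
          show min n (c + 1) = n by omega,
          show n - n = 0 by omega]
        clear hlam hlam' hdiff h2 hcond lam lam'
        push_cast
        nlinarith [mul_nonneg hn0 hd10]
      · have hb : (↑c + 1 : ℝ) < n := by exact_mod_cast h
        rcases le_or_gt n (d₁ + c + 1) with h' | h'
        · have hb' : (n : ℝ) ≤ ↑d₁ + ↑c + 1 := by exact_mod_cast h'
          rw [show min n (d₁ + c + 1) = n by omega,
            show min n (c + 1) = c + 1 by omega,
            show n - n = 0 by omega,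
            show ((n - (c + 1) : ℕ) : ℝ) = ↑n - (↑c + 1) by
              push_cast [Nat.cast_sub (show c + 1 ≤ n by omega)]; ring]
          clear hlam hlam' hdiff h2 hcond lam lam'
          push_cast
          nlinarith [mul_nonneg (by linarith : (0:ℝ) ≤ ↑n - (↑c + 1)) hd20,
            mul_nonneg hc0 hd10]
        · have hb' : (↑d₁ + ↑c + 1 : ℝ) < n := by exact_mod_cast h'
          rw [show min n (d₁ + c + 1) = d₁ + c + 1 by omega,
            show min n (c + 1) = c + 1 by omega,
            show ((n - (d₁ + c + 1) : ℕ) : ℝ) = ↑n - (↑d₁ + ↑c + 1) by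
              push_cast [Nat.cast_sub (show d₁ + c + 1 ≤ n by omega)]; ring,
            show ((n - (c + 1) : ℕ) : ℝ) = ↑n - (↑c + 1) by
              push_cast [Nat.cast_sub (show c + 1 ≤ n by omega)]; ring]
          clear hlam hlam' hdiff h2 hcond lam lam'
          push_cast
          nlinarith [mul_nonneg hd10 (by linarith : (0:ℝ) ≤ ↑d₁ + ↑c + 1 + (↑c + ↑d₂ + 1) - ↑n)]
end

section
/- Let n be the multiplicity function of a residual segment of type B. Let S_1, …, S_t (t ≥ 1) be integer intervals S_i = {b_i, b_i + 1, …, c_i} with 0 ≤ b_i ≤ c_i that are pairwise unlinked, i.e. for all i ≠ j either S_i ⊆ S_j, or S_j ⊆ S_i, or S_i ∪ S_j is not an interval of integers. Suppose that the function n′ : ℕ → ℕ defined by n′(j) = n(j) + #{i : b_i ≤ j ≤ c_i} is again the multiplicity function of a residual segment of type B. Then there exists an index i such that the function j ↦ n(j) + (1 if b_i ≤ j ≤ c_i, and 0 otherwise) is the multiplicity function of a residual segment of type B; that is, at least one of the linear segments merges alone with n to form a residual segment. -/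
/-- A residual segment of type B, presented by its multiplicity function `n : ℕ → ℕ`
together with explicit Jumps `a : Fin r → ℕ` (`r` odd, `a` strictly decreasing):
`n j = #{i : a i ≥ j}` for `j ≥ 1` and `n 0 = (r-1)/2`. -/
def ResidualBData (n : ℕ → ℕ) (r : ℕ) (a : Fin r → ℕ) : Prop :=
  Odd r ∧ StrictAnti a ∧
    (∀ j : ℕ, 1 ≤ j → n j = (Finset.univ.filter fun i : Fin r => j ≤ a i).card) ∧
    n 0 = (r - 1) / 2

/-- `n` is the multiplicity function of a residual segment of type B. -/
def IsResidualSegmentB (n : ℕ → ℕ) : Prop :=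
  ∃ (r : ℕ) (a : Fin r → ℕ), ResidualBData n r a

lemma residual_iff (n : ℕ → ℕ) :
    IsResidualSegmentB n ↔
      (∀ j, 1 ≤ j → n (j+1) ≤ n j ∧ n j ≤ n (j+1) + 1) ∧
      (∃ N, ∀ j, N ≤ j → n j = 0) ∧ n 0 = n 1 / 2 := by
  constructor
  · rintro ⟨r, a, hodd, hanti, hval, h0⟩
    have hainj : Function.Injective a := hanti.injective
    have hstep : ∀ j, 1 ≤ j → n (j+1) ≤ n j ∧ n j ≤ n (j+1) + 1 := by
      intro j hj
      rw [hval j hj, hval (j+1) (by omega)]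
      constructor
      · apply Finset.card_le_card
        intro i hi
        simp only [Finset.mem_filter, Finset.mem_univ, true_and] at *
        omega
      · have hsub : (Finset.univ.filter fun i : Fin r => j ≤ a i) ⊆
            (Finset.univ.filter fun i : Fin r => j + 1 ≤ a i) ∪
            (Finset.univ.filter fun i : Fin r => a i = j) := by
          intro i hi
          simp only [Finset.mem_filter, Finset.mem_union, Finset.mem_univ, true_and] at *
          omega
        have hone : (Finset.univ.filter fun i : Fin r => a i = j).card ≤ 1 := by
          apply Finset.card_le_one.2
          intro i hi i' hi'
          simp only [Finset.mem_filter, Finset.mem_univ, true_and] at hi hi'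
          exact hainj (hi.trans hi'.symm)
        calc (Finset.univ.filter fun i : Fin r => j ≤ a i).card
            ≤ _ := Finset.card_le_card hsub
          _ ≤ _ + _ := Finset.card_union_le _ _
          _ ≤ _ + 1 := by omega
      
    refine ⟨hstep, ?_, ?_⟩
    · have hr : 0 < r := hodd.pos
      refine ⟨a ⟨0, hr⟩ + 1, fun j hj => ?_⟩
      rcases Nat.eq_zero_or_pos j with h | h
      · omega
      rw [hval j h]
      convert Finset.card_empty
      rw [Finset.filter_eq_empty_iff]
      intro i _
      have : a i ≤ a ⟨0, hr⟩ := hanti.antitone (by simp [Fin.le_def])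
      omega
    · -- n 0 = n 1 / 2
      have h1 : n 1 = (Finset.univ.filter fun i : Fin r => 1 ≤ a i).card := hval 1 le_rfl
      have hdisj : Disjoint (Finset.univ.filter fun i : Fin r => 1 ≤ a i)
          (Finset.univ.filter fun i : Fin r => a i = 0) := by
        rw [Finset.disjoint_filter]
        intro i _ h1 h2; omega
      have hU : (Finset.univ.filter fun i : Fin r => 1 ≤ a i) ∪
          (Finset.univ.filter fun i : Fin r => a i = 0) = Finset.univ := by
        rw [← Finset.filter_or, Finset.filter_true_of_mem]
        intro i _; omega
      have hpart : (Finset.univ.filter fun i : Fin r => 1 ≤ a i).card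
          + (Finset.univ.filter fun i : Fin r => a i = 0).card = r := by
        rw [← Finset.card_union_of_disjoint hdisj, hU, Finset.card_fin]
      have hone : (Finset.univ.filter fun i : Fin r => a i = 0).card ≤ 1 := by
        apply Finset.card_le_one.2
        intro i hi i' hi'
        simp only [Finset.mem_filter, Finset.mem_univ, true_and] at hi hi'
        exact hainj (hi.trans hi'.symm)
      have hro : r % 2 = 1 := Nat.odd_iff.1 hodd
      omega
  · rintro ⟨hstep, ⟨N, hN⟩, h0⟩
    classical
    set J : Finset ℕ := (Finset.range (N+1)).filter
      (fun j => (1 ≤ j ∧ n (j+1) < n j) ∨ (j = 0 ∧ n 1 % 2 = 0)) with hJ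
    have hmemJ : ∀ j, j ∈ J ↔ ((1 ≤ j ∧ n (j+1) < n j) ∨ (j = 0 ∧ n 1 % 2 = 0)) := by
      intro j
      simp only [hJ, Finset.mem_filter, Finset.mem_range]
      constructor
      · tauto
      · intro h
        refine ⟨?_, h⟩
        rcases h with ⟨hj, hlt⟩ | ⟨hj, _⟩
        · by_contra hcon
          have : n j = 0 := hN j (by omega)
          omega
        · omega
    have hcount : ∀ d j, 1 ≤ j → N ≤ j + d → n j = (J.filter (fun x => j ≤ x)).card := by
      intro d
      induction d with
      | zero =>
        intro j hj hNj
        have : n j = 0 := hN j (by omega)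
        rw [this]
        symm
        rw [Finset.card_eq_zero, Finset.filter_eq_empty_iff]
        intro x hx hjx
        rw [hmemJ] at hx
        have hx0 : n x = 0 := hN x (by omega)
        have := hN (x+1) (by omega)
        omega
      | succ d ih =>
        intro j hj hNj
        by_cases hc : N ≤ j + d
        · exact ih j hj hc
        have hsplit : (J.filter (fun x => j ≤ x)) =
            (J.filter (fun x => j + 1 ≤ x)) ∪ (J.filter (fun x => x = j)) := by
          ext x
          simp only [Finset.mem_filter, Finset.mem_union]
          constructor
          · rintro ⟨h1, h2⟩
            rcases Nat.lt_or_ge j x with h | h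
            · exact Or.inl ⟨h1, h⟩
            · exact Or.inr ⟨h1, by omega⟩
          · rintro (⟨h1, h2⟩ | ⟨h1, h2⟩) <;> exact ⟨h1, by omega⟩
        have hdisj : Disjoint (J.filter (fun x => j + 1 ≤ x)) (J.filter (fun x => x = j)) := by
          rw [Finset.disjoint_filter]
          intro x _ h1 h2; omega
        have heq : (J.filter (fun x => x = j)) = if j ∈ J then {j} else ∅ :=
          Finset.filter_eq' J j
        have hih : n (j+1) = (J.filter (fun x => j + 1 ≤ x)).card :=
          ih (j+1) (by omega) (by omega)
        have hs := hstep j hj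
        rw [hsplit, Finset.card_union_of_disjoint hdisj, ← hih, heq]
        by_cases hjJ : j ∈ J
        · rw [if_pos hjJ]
          rw [hmemJ] at hjJ
          simp only [Finset.card_singleton]
          omega
        · rw [if_neg hjJ]
          rw [hmemJ] at hjJ
          push_neg at hjJ
          simp only [Finset.card_empty]
          have := hjJ.1
          omega
    set r := J.card with hr
    set f := J.orderEmbOfFin (rfl : J.card = r) with hf
    set a : Fin r → ℕ := fun i => f i.rev with ha
    have hn1 : n 1 = (J.filter (fun x => 1 ≤ x)).card := hcount N 1 le_rfl (by omega)
    have hc0 : (J.filter (fun x => x = 0)).card = if 0 ∈ J then 1 else 0 := by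
      rw [Finset.filter_eq']
      split <;> simp
    have hJsplit : r = (J.filter (fun x => 1 ≤ x)).card + (if 0 ∈ J then 1 else 0) := by
      rw [hr, ← hc0,
        ← Finset.card_union_of_disjoint (by rw [Finset.disjoint_filter]; intro x _ h1 h2; omega)]
      congr 1
      rw [← Finset.filter_or, Finset.filter_true_of_mem]
      intro x _; omega
    have h0J : 0 ∈ J ↔ n 1 % 2 = 0 := by
      rw [hmemJ]; omega
    have hodd : Odd r := by
      rw [Nat.odd_iff]
      by_cases hp : n 1 % 2 = 0
      · rw [if_pos (h0J.2 hp)] at hJsplit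
        omega
      · rw [if_neg (fun h => hp (h0J.1 h))] at hJsplit
        omega
    refine ⟨r, a, hodd, ?_, ?_, ?_⟩
    · intro i j hij
      have : j.rev < i.rev := by
        rw [Fin.rev_lt_rev]; exact hij
      exact (J.orderEmbOfFin rfl).strictMono this
    · intro j hj
      rw [hcount N j hj (by omega)]
      symm
      apply Finset.card_bij (fun i _ => a i)
      · intro i hi
        simp only [Finset.mem_filter, Finset.mem_univ, true_and] at hi ⊢
        exact ⟨J.orderEmbOfFin_mem rfl i.rev, hi⟩
      · intro i _ i' _ hii
        have : (i.rev : Fin r) = i'.rev := (J.orderEmbOfFin rfl).injective hii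
        simpa [Fin.rev_inj] using this
      · intro x hx
        simp only [Finset.mem_filter] at hx
        have hrange := Finset.range_orderEmbOfFin J (rfl : J.card = r)
        have : x ∈ Set.range f := by rw [hf, hrange]; exact hx.1
        obtain ⟨i, hi⟩ := this
        refine ⟨i.rev, ?_, ?_⟩
        · simp only [Finset.mem_filter, Finset.mem_univ, true_and, ha, Fin.rev_rev, hi]
          exact hx.2
        · simp [ha, Fin.rev_rev, hi]
    · -- n 0 = (r-1)/2
      by_cases hp : n 1 % 2 = 0
      · rw [if_pos (h0J.2 hp)] at hJsplit
        omega
      · rw [if_neg (fun h => hp (h0J.1 h))] at hJsplit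
        omega


/-- (Merging lemma.)  Let `n` be a residual segment of type B and let
`S_i = {b i, …, c i}` (`i : Fin t`, `t ≥ 1`) be pairwise unlinked intervals of naturals.
If adding all the intervals to `n` yields again a residual segment of type B, then some
single interval merges alone with `n` to a residual segment of type B. -/
theorem statement6 (n : ℕ → ℕ) (hn : IsResidualSegmentB n)
    (t : ℕ) (ht : 1 ≤ t) (b c : Fin t → ℕ) (hbc : ∀ i, b i ≤ c i)
    (hunlinked : ∀ i j : Fin t, i ≠ j →
      Finset.Icc (b i) (c i) ⊆ Finset.Icc (b j) (c j) ∨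
      Finset.Icc (b j) (c j) ⊆ Finset.Icc (b i) (c i) ∨
      ¬ ∃ l u : ℕ, Finset.Icc (b i) (c i) ∪ Finset.Icc (b j) (c j) = Finset.Icc l u)
    (h' : IsResidualSegmentB
      (fun j => n j + (Finset.univ.filter fun i : Fin t => b i ≤ j ∧ j ≤ c i).card)) :
    ∃ i : Fin t, IsResidualSegmentB
      (fun j => n j + if b i ≤ j ∧ j ≤ c i then 1 else 0) := by
  classical
  rw [residual_iff] at hn h'
  obtain ⟨hstep, -, h0⟩ := hn
  obtain ⟨hstep', ⟨N', hN'⟩, h0'⟩ := h'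

  -- key unlinkedness fact
  have hkey : ∀ (i i' : Fin t) (j : ℕ), c i = j → b i' = j + 1 → False := by
    intro i i' j hci hbi'
    have hne : i ≠ i' := by
      rintro rfl
      have := hbc i
      omega
    rcases hunlinked i i' hne with h | h | h
    · have : b i ∈ Finset.Icc (b i') (c i') := h (Finset.mem_Icc.2 ⟨le_rfl, hbc i⟩)
      rw [Finset.mem_Icc] at this
      have := hbc i
      omega
    · have : b i' ∈ Finset.Icc (b i) (c i) := h (Finset.mem_Icc.2 ⟨le_rfl, hbc i'⟩)
      rw [Finset.mem_Icc] at this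
      omega
    · apply h
      refine ⟨b i, c i', ?_⟩
      ext x
      simp only [Finset.mem_union, Finset.mem_Icc]
      have := hbc i
      have := hbc i'
      omega
  -- L1 : every right endpoint ≥ 1 is a non-jump of n
  have hL1 : ∀ i : Fin t, 1 ≤ c i → n (c i) = n (c i + 1) := by
    intro i hci
    set j := c i with hj
    have hsub : (Finset.univ.filter fun i' : Fin t => b i' ≤ j + 1 ∧ j + 1 ≤ c i')
        ⊆ (Finset.univ.filter fun i' : Fin t => b i' ≤ j ∧ j ≤ c i') := by
      intro i' hi'
      simp only [Finset.mem_filter, Finset.mem_univ, true_and] at hi' ⊢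
      have : b i' ≠ j + 1 := fun h => hkey i i' j rfl h
      omega
    have hmem : i ∈ (Finset.univ.filter fun i' : Fin t => b i' ≤ j ∧ j ≤ c i') := by
      simp only [Finset.mem_filter, Finset.mem_univ, true_and]
      exact ⟨hbc i, le_rfl⟩
    have hnmem : i ∉ (Finset.univ.filter fun i' : Fin t => b i' ≤ j + 1 ∧ j + 1 ≤ c i') := by
      simp only [Finset.mem_filter, Finset.mem_univ, true_and]
      omega
    have hlt : (Finset.univ.filter fun i' : Fin t => b i' ≤ j + 1 ∧ j + 1 ≤ c i').card
        < (Finset.univ.filter fun i' : Fin t => b i' ≤ j ∧ j ≤ c i').card :=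
      Finset.card_lt_card ((Finset.ssubset_iff_of_subset hsub).2 ⟨i, hmem, hnmem⟩)
    have h1 := hstep' j hci
    have h2 := hstep j hci
    omega
  -- L2 : every left endpoint ≥ 2 has a jump just below it
  have hL2 : ∀ i : Fin t, 2 ≤ b i → n (b i - 1) = n (b i) + 1 := by
    intro i hbi
    obtain ⟨j, hj⟩ : ∃ j, b i = j + 1 := ⟨b i - 1, by omega⟩
    have hj1 : 1 ≤ j := by omega
    have hsub : (Finset.univ.filter fun i' : Fin t => b i' ≤ j ∧ j ≤ c i')
        ⊆ (Finset.univ.filter fun i' : Fin t => b i' ≤ j + 1 ∧ j + 1 ≤ c i') := by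
      intro i' hi'
      simp only [Finset.mem_filter, Finset.mem_univ, true_and] at hi' ⊢
      have : c i' ≠ j := fun h => hkey i' i j h hj
      omega
    have hmem : i ∈ (Finset.univ.filter fun i' : Fin t => b i' ≤ j + 1 ∧ j + 1 ≤ c i') := by
      simp only [Finset.mem_filter, Finset.mem_univ, true_and]
      have := hbc i
      omega
    have hnmem : i ∉ (Finset.univ.filter fun i' : Fin t => b i' ≤ j ∧ j ≤ c i') := by
      simp only [Finset.mem_filter, Finset.mem_univ, true_and]
      omega
    have hlt : (Finset.univ.filter fun i' : Fin t => b i' ≤ j ∧ j ≤ c i').card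
        < (Finset.univ.filter fun i' : Fin t => b i' ≤ j + 1 ∧ j + 1 ≤ c i').card :=
      Finset.card_lt_card ((Finset.ssubset_iff_of_subset hsub).2 ⟨i, hmem, hnmem⟩)
    have h1 := hstep' j hj1
    have h2 := hstep j hj1
    rw [hj]
    simp only [Nat.add_sub_cancel]
    omega
  -- a sufficient condition for a single interval to merge
  have hmerge : ∀ i : Fin t, 1 ≤ c i →
      (b i = 1 → n 1 % 2 = 0) → (b i = 0 → n 1 % 2 = 1) →
      IsResidualSegmentB (fun j => n j + if b i ≤ j ∧ j ≤ c i then 1 else 0) := by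
    intro i hci hp1 hp0
    rw [residual_iff]
    have hbci := hbc i
    refine ⟨?_, ⟨N' + c i + 1, ?_⟩, ?_⟩
    · intro j hj
      have hs := hstep j hj
      by_cases h1 : j = c i
      · have e1 : n (c i) = n (c i + 1) := hL1 i hci
        subst h1
        refine ⟨?_, ?_⟩ <;> (split_ifs <;> omega)
      by_cases h2 : j + 1 = b i
      · have e2 : n j = n (j + 1) + 1 := by
          have := hL2 i (by omega)
          rw [← h2] at this
          simpa using this
        refine ⟨?_, ?_⟩ <;> (split_ifs <;> omega)
      refine ⟨?_, ?_⟩ <;> (split_ifs <;> omega)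
    · intro j hj
      have hz : n j + (Finset.univ.filter fun i' : Fin t => b i' ≤ j ∧ j ≤ c i').card = 0 :=
        hN' j (by omega)
      split_ifs with h
      · omega
      · omega
    · by_cases hb0 : b i = 0
      · have := hp0 hb0
        split_ifs <;> omega
      by_cases hb1 : b i = 1
      · have := hp1 hb1
        split_ifs <;> omega
      · split_ifs <;> omega
  by_cases hbig : ∃ i, 2 ≤ b i
  · obtain ⟨i, hi⟩ := hbig
    exact ⟨i, hmerge i (by have := hbc i; omega) (fun h => by omega) (fun h => by omega)⟩
  push_neg at hbig
  set P := Finset.univ.filter (fun i : Fin t => b i = 1) with hP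
  set Q := Finset.univ.filter (fun i : Fin t => b i = 0 ∧ 1 ≤ c i) with hQ
  set Z := Finset.univ.filter (fun i : Fin t => c i = 0) with hZ
  have hA0 : (Finset.univ.filter fun i : Fin t => b i ≤ 0 ∧ 0 ≤ c i).card
      = Q.card + Z.card := by
    rw [← Finset.card_union_of_disjoint]
    · congr 1
      rw [hQ, hZ, ← Finset.filter_or]
      apply Finset.filter_congr
      intro i _
      have := hbc i
      constructor
      · intro h; omega
      · intro h; omega
    · rw [Finset.disjoint_filter]
      intro i _ h1 h2
      omega
  have hA1 : (Finset.univ.filter fun i : Fin t => b i ≤ 1 ∧ 1 ≤ c i).card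
      = P.card + Q.card := by
    rw [← Finset.card_union_of_disjoint]
    · congr 1
      rw [hP, hQ, ← Finset.filter_or]
      apply Finset.filter_congr
      intro i _
      have := hbc i
      have := hbig i
      constructor
      · intro h; omega
      · intro h; omega
    · rw [Finset.disjoint_filter]
      intro i _ h1 h2
      omega
  have htot : P.card + Q.card + Z.card = t := by
    rw [← Finset.card_union_of_disjoint, ← Finset.card_union_of_disjoint]
    · rw [hP, hQ, hZ, ← Finset.filter_or, ← Finset.filter_or]
      rw [Finset.filter_true_of_mem, Finset.card_univ, Fintype.card_fin]
      intro i _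
      have := hbc i
      have := hbig i
      omega
    · rw [Finset.disjoint_union_left]
      constructor <;> (rw [Finset.disjoint_filter]; intro i _ h1 h2; have := hbc i; omega)
    · rw [Finset.disjoint_filter]
      intro i _ h1 h2
      omega
  rw [hA0, hA1] at h0'
  by_cases hpar : n 1 % 2 = 0
  · by_cases hPne : P.Nonempty
    · obtain ⟨i, hiP⟩ := hPne
      rw [hP, Finset.mem_filter] at hiP
      refine ⟨i, hmerge i (by have := hbc i; omega) (fun _ => hpar) (fun h => by omega)⟩
    · have hp0 : P.card = 0 := by
        rw [Finset.card_eq_zero, ← Finset.not_nonempty_iff_eq_empty]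
        exact hPne
      omega
  · by_cases hQne : Q.Nonempty
    · obtain ⟨i, hiQ⟩ := hQne
      rw [hQ, Finset.mem_filter] at hiQ
      refine ⟨i, hmerge i hiQ.2.2 (fun h => by omega) (fun _ => by omega)⟩
    · have hq0 : Q.card = 0 := by
        rw [Finset.card_eq_zero, ← Finset.not_nonempty_iff_eq_empty]
        exact hQne
      rcases Nat.eq_zero_or_pos P.card with hp | hp
      · omega
      · have hzpos : 0 < Z.card := by omega
        obtain ⟨i, hiP⟩ := Finset.card_pos.1 hp
        obtain ⟨i', hi'Z⟩ := Finset.card_pos.1 hzpos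
        rw [hP, Finset.mem_filter] at hiP
        rw [hZ, Finset.mem_filter] at hi'Z
        exact absurd (hkey i' i 0 hi'Z.2 (by omega)) (fun h => h)
end

section
/- Let N be a residual segment of type B of length d ≥ 1 with Jumps a_1 > … > a_r where r ≥ 3; fix 1 ≤ i < r and set 𝔞 = a_i and a_− = a_{i+1}, two consecutive Jumps. Call an integer 𝔟 admissible if 𝔞 > 𝔟, 𝔞 + 𝔟 > 0, and there is a (necessarily unique) residual segment m_𝔟 of type B with N(j) = m_𝔟(j) + #{k ∈ ℤ : 𝔟 ≤ k ≤ 𝔞 and |k| = j} for every j ∈ ℕ. For an admissible 𝔟, let λ_𝔟 ∈ ℝ^d be the vector whose first 𝔞 − 𝔟 + 1 coordinates are 𝔞, 𝔞−1, …, 𝔟 and whose remaining coordinates list, in weakly decreasing order, the multiset in which each j ∈ ℕ occurs m_𝔟(j) times. For λ ∈ ℝ^d set C(λ) = #{(p,q) : 1 ≤ p < q ≤ d, λ_p < λ_q} + #{(p,q) : 1 ≤ p < q ≤ d, λ_p + λ_q < 0} + #{p : λ_p < 0}, the number of positive roots β of the root system of type B_d with ⟨λ, β^∨⟩ < 0.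 Then 𝔟 = −a_− is admissible, and C(λ_𝔟) ≤ C(λ_{−a_−}) for every admissible 𝔟; i.e. the count C is maximal at the point of the form (𝔞, …, −a_−)(m). -/
/-- `#{k ∈ ℤ : 𝔟 ≤ k ≤ 𝔞 ∧ |k| = j}`: the multiplicity with which `j` occurs among the
absolute values of the entries of the linear segment `(𝔞, 𝔞-1, …, 𝔟)`. -/
noncomputable def segCount (𝔞 : ℕ) (𝔟 : ℤ) (j : ℕ) : ℕ :=
  ((Finset.Icc 𝔟 (𝔞 : ℤ)).filter fun k => k.natAbs = j).card

/-- `𝔟` is admissible for `N` and `𝔞`: `𝔞 > 𝔟`, `𝔞 + 𝔟 > 0`, and withdrawing the linear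
segment `(𝔞, …, 𝔟)` from `N` leaves a residual segment of type B. -/
def AdmissibleB (N : ℕ → ℕ) (𝔞 : ℕ) (𝔟 : ℤ) : Prop :=
  𝔟 < (𝔞 : ℤ) ∧ 0 < (𝔞 : ℤ) + 𝔟 ∧
    ∃ m : ℕ → ℕ, IsResidualSegmentB m ∧ ∀ j : ℕ, N j = m j + segCount 𝔞 𝔟 j

/-- `lam` is the vector `λ_𝔟` of length `d`: its first `𝔞 - 𝔟 + 1` coordinates are
`𝔞, 𝔞-1, …, 𝔟`, and its remaining coordinates list, weakly decreasingly, the multiset in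
which each `j : ℕ` occurs `m j` times. -/
def IsLambdaVec (𝔞 : ℕ) (𝔟 : ℤ) (m : ℕ → ℕ) (d : ℕ) (lam : Fin d → ℝ) : Prop :=
  (∀ p : Fin d, (p : ℕ) < ((𝔞 : ℤ) - 𝔟).toNat + 1 → lam p = (𝔞 : ℝ) - (p : ℕ)) ∧
  (∀ p q : Fin d, ((𝔞 : ℤ) - 𝔟).toNat + 1 ≤ (p : ℕ) → p ≤ q → lam q ≤ lam p) ∧
  (∀ j : ℕ, (Finset.univ.filter fun p : Fin d =>
      ((𝔞 : ℤ) - 𝔟).toNat + 1 ≤ (p : ℕ) ∧ lam p = (j : ℝ)).card = m j)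

/-- `C(λ)`: the number of positive roots `β` of the root system of type `B_d` with
`⟨λ, β^∨⟩ < 0`. -/
noncomputable def Cfun {d : ℕ} (lam : Fin d → ℝ) : ℕ :=
  (Finset.univ.filter fun pq : Fin d × Fin d => pq.1 < pq.2 ∧ lam pq.1 < lam pq.2).card +
  (Finset.univ.filter fun pq : Fin d × Fin d => pq.1 < pq.2 ∧ lam pq.1 + lam pq.2 < 0).card +
  (Finset.univ.filter fun p : Fin d => lam p < 0).card

open Finset

lemma segCount_pos_eq (𝔞 : ℕ) (𝔟 : ℤ) (j : ℕ) (hj : 1 ≤ j) (h1 : -(𝔞:ℤ) < 𝔟) :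
    segCount 𝔞 𝔟 j =
      (if 𝔟 ≤ (j:ℤ) ∧ j ≤ 𝔞 then 1 else 0) + (if 𝔟 ≤ -(j:ℤ) then 1 else 0) := by
  unfold segCount
  by_cases hA : 𝔟 ≤ (j:ℤ) ∧ j ≤ 𝔞
  · by_cases hB : 𝔟 ≤ -(j:ℤ)
    · have : ((Finset.Icc 𝔟 (𝔞 : ℤ)).filter fun k => k.natAbs = j) = {(j:ℤ), -(j:ℤ)} := by
        ext k; simp only [mem_filter, mem_Icc, mem_insert, mem_singleton]; omega
      rw [this, card_insert_of_notMem (by simp; omega), card_singleton]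
      simp [hA, hB]
    · have : ((Finset.Icc 𝔟 (𝔞 : ℤ)).filter fun k => k.natAbs = j) = {(j:ℤ)} := by
        ext k; simp only [mem_filter, mem_Icc, mem_singleton]; omega
      rw [this]; simp [hA, hB]
  · by_cases hB : 𝔟 ≤ -(j:ℤ)
    · have : ((Finset.Icc 𝔟 (𝔞 : ℤ)).filter fun k => k.natAbs = j) = {-(j:ℤ)} := by
        ext k; simp only [mem_filter, mem_Icc, mem_singleton]; omega
      rw [this]; simp [hA, hB]
    · have : ((Finset.Icc 𝔟 (𝔞 : ℤ)).filter fun k => k.natAbs = j) = ∅ := by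
        ext k; simp only [mem_filter, mem_Icc, notMem_empty, iff_false, not_and]; omega
      rw [this]; simp [hA, hB]

lemma segCount_zero (𝔞 : ℕ) (𝔟 : ℤ) (h : 𝔟 ≤ 0) :
    segCount 𝔞 𝔟 0 = 1 := by
  unfold segCount
  have : ((Finset.Icc 𝔟 (𝔞 : ℤ)).filter fun k => k.natAbs = 0) = {(0:ℤ)} := by
    ext k; simp only [mem_filter, mem_Icc, mem_singleton]; omega
  rw [this, card_singleton]

lemma seg_sum (𝔞 : ℕ) (𝔟 : ℤ) (h1 : -(𝔞:ℤ) < 𝔟) (B : ℕ) (hB : 𝔞 < B)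
    (Q : ℕ → Prop) [DecidablePred Q] :
    ∑ j ∈ range B, (if Q j then (segCount 𝔞 𝔟 j) else 0) =
      ((Finset.Icc 𝔟 (𝔞:ℤ)).filter fun k => Q k.natAbs).card := by
  have key : ((Finset.Icc 𝔟 (𝔞:ℤ)).filter fun k => Q k.natAbs) =
      (range B).biUnion (fun j => if Q j then ((Finset.Icc 𝔟 (𝔞:ℤ)).filter fun k => k.natAbs = j) else ∅) := by
    ext k
    simp only [mem_biUnion, mem_filter, mem_Icc, mem_range]
    constructor
    · rintro ⟨⟨hk1, hk2⟩, hQ⟩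
      exact ⟨k.natAbs, by omega, by rw [if_pos hQ]; simp [mem_filter, mem_Icc]; omega⟩
    · rintro ⟨j, hj, hk⟩
      by_cases hQ : Q j
      · rw [if_pos hQ] at hk
        simp only [mem_filter, mem_Icc] at hk
        obtain ⟨⟨h1, h2⟩, h3⟩ := hk
        exact ⟨⟨h1, h2⟩, h3 ▸ hQ⟩
      · rw [if_neg hQ] at hk; simp at hk
  rw [key, card_biUnion]
  · apply Finset.sum_congr rfl
    intro j _
    by_cases hQ : Q j <;> simp [hQ, segCount]
  · intro x _ y _ hxy
    show Disjoint _ _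
    by_cases hx : Q x <;> by_cases hy : Q y <;> simp [hx, hy]
    intro s hs1 hs2
    simp only [le_eq_subset, bot_eq_empty]
    intro k hk
    have h1 := hs1 hk
    have h2 := hs2 hk
    simp only [mem_filter] at h1 h2
    exact absurd (h1.2 ▸ h2.2) hxy

lemma seg_total (𝔞 : ℕ) (𝔟 : ℤ) (h1 : -(𝔞:ℤ) < 𝔟) (h2 : 𝔟 ≤ (𝔞:ℤ)) (B : ℕ) (hB : 𝔞 < B) :
    ∑ j ∈ range B, segCount 𝔞 𝔟 j = ((𝔞:ℤ) - 𝔟).toNat + 1 := by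
  have := seg_sum 𝔞 𝔟 h1 B hB (fun _ => True)
  simp only [if_true] at this
  rw [this, Finset.filter_true_of_mem (by intros; trivial), Int.card_Icc]
  omega


def psiSum (N : ℕ → ℕ) (B : ℕ) (v : ℤ) : ℤ :=
  (∑ j ∈ range B, if v < (j:ℤ) then (N j : ℤ) else 0) +
  (∑ j ∈ range B, if (j:ℤ) < -v then (N j : ℤ) else 0)

noncomputable def Wcard (𝔞 : ℕ) (c : ℤ) (v : ℤ) : ℕ :=
  ((Icc c (𝔞:ℤ)).filter fun k => v < (k.natAbs:ℤ)).card
  + ((Icc c (𝔞:ℤ)).filter fun k => (k.natAbs:ℤ) < -v).card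

noncomputable def Dfun (N : ℕ → ℕ) (B : ℕ) (𝔞 : ℕ) (c : ℤ) : ℤ :=
  (∑ v ∈ Icc c (𝔞:ℤ), (psiSum N B v - (Wcard 𝔞 c v : ℤ)))
  + ((((Icc c (𝔞:ℤ)) ×ˢ (Icc c (𝔞:ℤ))).filter fun xy : ℤ×ℤ => xy.2 < xy.1 ∧ xy.1 + xy.2 < 0).card : ℤ)
  + (((Icc c (𝔞:ℤ)).filter fun v => v < 0).card : ℤ)

lemma card_ite_insert {α : Type*} [DecidableEq α] (P : Prop) [Decidable P] (x : α) (s : Finset α)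
    (hx : x ∉ s) : (if P then insert x s else s).card = s.card + (if P then 1 else 0) := by
  split_ifs with h
  · rw [card_insert_of_notMem hx]
  · rfl

lemma psi_lb_pos (N : ℕ → ℕ) (B 𝔞 : ℕ) (hB : 𝔞 < B)
    (h1 : ∀ j, 1 ≤ j → j ≤ 𝔞 → 1 ≤ N j) (c : ℤ) (hc : 1 ≤ c) (hc2 : c ≤ (𝔞:ℤ)) :
    (𝔞:ℤ) - c + 1 ≤ psiSum N B (c-1) := by
  have hb2 : (0:ℤ) ≤ ∑ j ∈ range B, if (j:ℤ) < -(c-1) then (N j : ℤ) else 0 :=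
    Finset.sum_nonneg (by intro j _; positivity)
  have hb1 : (𝔞:ℤ) - c + 1 ≤ ∑ j ∈ range B, if (c-1) < (j:ℤ) then (N j : ℤ) else 0 := by
    have key : ∀ j ∈ range B, (if ((c-1) < (j:ℤ) ∧ (j:ℤ) ≤ 𝔞) then (1:ℤ) else 0)
        ≤ (if (c-1) < (j:ℤ) then (N j : ℤ) else 0) := by
      intro j _
      by_cases hj : (c-1) < (j:ℤ) ∧ (j:ℤ) ≤ 𝔞
      · rw [if_pos hj, if_pos hj.1]
        have : 1 ≤ N j := h1 j (by omega) (by exact_mod_cast hj.2)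
        exact_mod_cast this
      · rw [if_neg hj]
        by_cases h : (c-1) < (j:ℤ) <;> simp [h]
    refine le_trans ?_ (Finset.sum_le_sum key)
    have : ∑ j ∈ range B, (if ((c-1) < (j:ℤ) ∧ (j:ℤ) ≤ 𝔞) then (1:ℤ) else 0)
        = ((range B).filter (fun j : ℕ => (c-1) < (j:ℤ) ∧ (j:ℤ) ≤ 𝔞)).card := by
      rw [Finset.card_filter]; push_cast; rfl
    rw [this]
    have : (range B).filter (fun j : ℕ => (c-1) < (j:ℤ) ∧ (j:ℤ) ≤ 𝔞) = Ico c.toNat (𝔞+1) := by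
      ext j; simp only [mem_filter, mem_range, mem_Ico]; omega
    rw [this, Nat.card_Ico]; omega
  unfold psiSum; omega


lemma psi_lb_neg (N : ℕ → ℕ) (B 𝔞 am d : ℕ) (hB : 𝔞 < B) (ha : am < 𝔞)
    (hsum : ∑ j ∈ range B, N j = d)
    (h2 : ∀ j, 1 ≤ j → j ≤ am → 2 ≤ N j) (c : ℤ) (hc : c ≤ 0) (hc1 : -(am:ℤ) ≤ c - 1) :
    (d:ℤ) + N 0 + 2*(-c) ≤ psiSum N B (c-1) := by
  have hb1 : (∑ j ∈ range B, if (c-1) < (j:ℤ) then (N j : ℤ) else 0) = d := by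
    rw [← hsum]
    push_cast
    apply Finset.sum_congr rfl
    intro j _
    rw [if_pos (by omega)]
  have hs : (1 - c).toNat ≤ am := by omega
  have hb2 : (N 0 : ℤ) + 2*(-c) ≤ ∑ j ∈ range B, if (j:ℤ) < -(c-1) then (N j : ℤ) else 0 := by
    have key : ∀ j ∈ range B, (if (j:ℤ) < 1-c then (if j = 0 then (N 0:ℤ) else 2) else 0)
        ≤ (if (j:ℤ) < -(c-1) then (N j : ℤ) else 0) := by
      intro j _
      by_cases hj : (j:ℤ) < 1-c
      · have hcond : (j:ℤ) < -(c-1) := by omega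
        rw [if_pos hj, if_pos hcond]
        by_cases h0 : j = 0
        · subst h0; simp
        · rw [if_neg h0]
          have hj2 : 2 ≤ N j := h2 j (by omega) (by omega)
          exact_mod_cast hj2
      · have hcond : ¬ (j:ℤ) < -(c-1) := by omega
        rw [if_neg hj, if_neg hcond]
    refine le_trans ?_ (Finset.sum_le_sum key)
    have e1 : ∀ j : ℕ, ((j:ℤ) < 1-c) ↔ (j < (1-c).toNat) := by intro j; omega
    have e2 : ∑ j ∈ range B, (if (j:ℤ) < 1-c then (if j = 0 then (N 0:ℤ) else 2) else 0)
        = ∑ j ∈ range ((1-c).toNat), (if j = 0 then (N 0:ℤ) else 2) := by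
      rw [← Finset.sum_range_add_sum_Ico _ (show (1-c).toNat ≤ B by omega)]
      have z : ∑ j ∈ Ico ((1-c).toNat) B, (if (j:ℤ) < 1-c then (if j = 0 then (N 0:ℤ) else 2) else 0) = 0 := by
        apply Finset.sum_eq_zero; intro j hj; simp only [mem_Ico] at hj
        rw [if_neg (by omega)]
      rw [z, add_zero]
      apply Finset.sum_congr rfl
      intro j hj; simp only [mem_range] at hj
      rw [if_pos (by omega)]
    rw [e2]
    have : ∀ s : ℕ, ∑ j ∈ range (s+1), (if j = 0 then (N 0:ℤ) else 2) = N 0 + 2*s := by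
      intro s; induction s with
      | zero => simp
      | succ n ih => rw [Finset.sum_range_succ, ih]; push_cast; ring
    have hpos : (1-c).toNat = ((1-c).toNat - 1) + 1 := by omega
    rw [hpos, this]
    have : ((((1:ℤ)-c).toNat - 1 : ℕ) : ℤ) = -c := by omega
    rw [this]
  unfold psiSum; omega

section Step
variable (N : ℕ → ℕ) (B 𝔞 am d : ℕ)

lemma Dstep (hB : 𝔞 < B) (ha : am < 𝔞)
    (hsum : ∑ j ∈ range B, N j = d)
    (h1 : ∀ j, 1 ≤ j → j ≤ 𝔞 → 1 ≤ N j)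
    (h2 : ∀ j, 1 ≤ j → j ≤ am → 2 ≤ N j)
    (h3 : N 0 + 𝔞 + am ≤ d) (h4 : 1 ≤ N 0)
    (c : ℤ) (hc1 : -(am:ℤ) ≤ c - 1) (hc2 : c ≤ (𝔞:ℤ)) :
    Dfun N B 𝔞 c ≤ Dfun N B 𝔞 (c-1) := by
  have h𝔞c : -(𝔞:ℤ) < c - 1 := by omega
  set S := Icc c (𝔞:ℤ) with hS
  have hins : Icc (c-1) (𝔞:ℤ) = insert (c-1) S := by
    ext k; simp only [hS, mem_Icc, mem_insert]; omega
  have hnot : (c-1) ∉ S := by simp only [hS, mem_Icc]; omega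
  have hW : ∀ v : ℤ, (Wcard 𝔞 (c-1) v : ℤ) = (Wcard 𝔞 c v : ℤ)
      + ((if v < (((c-1).natAbs : ℕ):ℤ) then 1 else 0) + (if (((c-1).natAbs : ℕ):ℤ) < -v then 1 else 0)) := by
    intro v
    unfold Wcard
    rw [hins, filter_insert, filter_insert,
        card_ite_insert _ _ _ (fun h => hnot (Finset.mem_of_mem_filter _ h)),
        card_ite_insert _ _ _ (fun h => hnot (Finset.mem_of_mem_filter _ h))]
    split_ifs <;> push_cast <;> ring
  have hT : (((Icc (c-1) (𝔞:ℤ)).filter fun v => v < 0).card : ℤ)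
      = ((S.filter fun v => v < 0).card : ℤ) + (if c - 1 < 0 then 1 else 0) := by
    rw [hins, filter_insert, card_ite_insert _ _ _ (fun h => hnot (Finset.mem_of_mem_filter _ h))]
    split_ifs <;> push_cast <;> ring
  have hP : ((((Icc (c-1) (𝔞:ℤ)) ×ˢ (Icc (c-1) (𝔞:ℤ))).filter fun xy : ℤ×ℤ => xy.2 < xy.1 ∧ xy.1 + xy.2 < 0).card : ℤ)
      = (((S ×ˢ S).filter fun xy : ℤ×ℤ => xy.2 < xy.1 ∧ xy.1 + xy.2 < 0).card : ℤ)
        + ((S.filter fun x => x + (c-1) < 0).card : ℤ) := by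
    have hset : ((Icc (c-1) (𝔞:ℤ)) ×ˢ (Icc (c-1) (𝔞:ℤ))).filter (fun xy : ℤ×ℤ => xy.2 < xy.1 ∧ xy.1 + xy.2 < 0)
        = ((S ×ˢ S).filter fun xy : ℤ×ℤ => xy.2 < xy.1 ∧ xy.1 + xy.2 < 0)
          ∪ (S.filter fun x => x + (c-1) < 0).image (fun x => (x, c-1)) := by
      ext ⟨x, y⟩
      simp only [mem_filter, mem_product, mem_union, mem_image, mem_Icc, hS, Prod.mk.injEq]
      constructor
      · rintro ⟨⟨⟨hx1, hx2⟩, hy1, hy2⟩, hyx, hsum'⟩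
        by_cases hy : y = c - 1
        · right; exact ⟨x, ⟨⟨by omega, hx2⟩, by omega⟩, by omega, by omega⟩
        · left; exact ⟨⟨⟨by omega, hx2⟩, by omega, hy2⟩, hyx, hsum'⟩
      · rintro (⟨⟨⟨hx1, hx2⟩, hy1, hy2⟩, hyx, hsum'⟩ | ⟨z, ⟨⟨hz1, hz2⟩, hz3⟩, rfl, rfl⟩)
        · exact ⟨⟨⟨by omega, hx2⟩, by omega, hy2⟩, hyx, hsum'⟩
        · exact ⟨⟨⟨by omega, hz2⟩, by omega, by omega⟩, by omega, by omega⟩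
    rw [hset, card_union_of_disjoint, card_image_of_injective]
    · push_cast; ring
    · intro x1 x2 h; simpa using h
    · rw [Finset.disjoint_right]
      rintro ⟨x, y⟩ hp1 hp2
      simp only [mem_image, mem_filter, mem_product, mem_Icc, hS, Prod.mk.injEq] at hp1 hp2
      obtain ⟨z, _, _, rfl⟩ := hp1
      omega
  have hsumS : ∑ v ∈ Icc (c-1) (𝔞:ℤ), (psiSum N B v - (Wcard 𝔞 (c-1) v : ℤ))
      = (psiSum N B (c-1) - (Wcard 𝔞 (c-1) (c-1) : ℤ))
        + (∑ v ∈ S, (psiSum N B v - (Wcard 𝔞 c v : ℤ)))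
        - (((S.filter fun v => v < (((c-1).natAbs : ℕ):ℤ)).card : ℤ)
           + ((S.filter fun v => (((c-1).natAbs : ℕ):ℤ) < -v).card : ℤ)) := by
    rw [hins, Finset.sum_insert hnot]
    have : ∑ v ∈ S, (psiSum N B v - (Wcard 𝔞 (c-1) v : ℤ))
        = ∑ v ∈ S, ((psiSum N B v - (Wcard 𝔞 c v : ℤ))
            - ((if v < (((c-1).natAbs : ℕ):ℤ) then 1 else 0) + (if (((c-1).natAbs : ℕ):ℤ) < -v then (1:ℤ) else 0))) := by
      apply Finset.sum_congr rfl; intro v _; rw [hW v]; ring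
    rw [this, Finset.sum_sub_distrib, Finset.sum_add_distrib, Finset.sum_boole, Finset.sum_boole]
    ring
  have key : Dfun N B 𝔞 (c-1) = Dfun N B 𝔞 c
      + (psiSum N B (c-1) - (Wcard 𝔞 (c-1) (c-1) : ℤ)
         - (((S.filter fun v => v < (((c-1).natAbs : ℕ):ℤ)).card : ℤ)
            + ((S.filter fun v => (((c-1).natAbs : ℕ):ℤ) < -v).card : ℤ))
         + ((S.filter fun x => x + (c-1) < 0).card : ℤ)
         + (if c - 1 < 0 then 1 else 0)) := by
    unfold Dfun
    rw [hsumS, hP, hT, ← hS]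
    ring
  rw [key]
  have main : 0 ≤ psiSum N B (c-1) - (Wcard 𝔞 (c-1) (c-1) : ℤ)
         - (((S.filter fun v => v < (((c-1).natAbs : ℕ):ℤ)).card : ℤ)
            + ((S.filter fun v => (((c-1).natAbs : ℕ):ℤ) < -v).card : ℤ))
         + ((S.filter fun x => x + (c-1) < 0).card : ℤ)
         + (if c - 1 < 0 then 1 else 0) := by
    by_cases hc : 1 ≤ c
    · -- positive case
      have e1 : ((Icc (c-1) (𝔞:ℤ)).filter fun k => (c-1) < (k.natAbs:ℤ)) = Icc c (𝔞:ℤ) := by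
        ext k; simp only [mem_filter, mem_Icc]; omega
      have e2 : ((Icc (c-1) (𝔞:ℤ)).filter fun k => (k.natAbs:ℤ) < -(c-1)) = ∅ := by
        ext k; simp only [mem_filter, mem_Icc, notMem_empty, iff_false, not_and]; omega
      have eW : (Wcard 𝔞 (c-1) (c-1) : ℤ) = (𝔞:ℤ) - c + 1 := by
        unfold Wcard
        rw [e1, e2, card_empty, Int.card_Icc]
        push_cast; omega
      have e3 : (S.filter fun v => v < (((c-1).natAbs : ℕ):ℤ)) = ∅ := by
        ext v; simp only [hS, mem_filter, mem_Icc, notMem_empty, iff_false, not_and]; omega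
      have e4 : (S.filter fun v => (((c-1).natAbs : ℕ):ℤ) < -v) = ∅ := by
        ext v; simp only [hS, mem_filter, mem_Icc, notMem_empty, iff_false, not_and]; omega
      have e5 : (S.filter fun x => x + (c-1) < 0) = ∅ := by
        ext x; simp only [hS, mem_filter, mem_Icc, notMem_empty, iff_false, not_and]; omega
      rw [eW, e3, e4, e5, if_neg (by omega)]
      have := psi_lb_pos N B 𝔞 hB h1 c hc hc2
      simp only [card_empty]
      push_cast
      linarith
    · -- nonpositive case
      push_neg at hc
      have hcc : c ≤ 0 := by omega
      have e1 : ((Icc (c-1) (𝔞:ℤ)).filter fun k => (c-1) < (k.natAbs:ℤ)) = Icc (c-1) (𝔞:ℤ) := by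
        apply Finset.filter_true_of_mem; intro k hk; simp only [mem_Icc] at hk; omega
      have e2 : ((Icc (c-1) (𝔞:ℤ)).filter fun k => (k.natAbs:ℤ) < -(c-1)) = Icc c (-c) := by
        ext k; simp only [mem_filter, mem_Icc]; omega
      have eW : (Wcard 𝔞 (c-1) (c-1) : ℤ) = ((𝔞:ℤ) - c + 2) + (1 - 2*c) := by
        unfold Wcard
        rw [e1, e2, Int.card_Icc, Int.card_Icc]
        push_cast; omega
      have e3 : (S.filter fun v => v < (((c-1).natAbs : ℕ):ℤ)) = Icc c (-c) := by
        ext v; simp only [hS, mem_filter, mem_Icc]; omega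
      have e4 : (S.filter fun v => (((c-1).natAbs : ℕ):ℤ) < -v) = ∅ := by
        ext v; simp only [hS, mem_filter, mem_Icc, notMem_empty, iff_false, not_and]; omega
      have e5 : (S.filter fun x => x + (c-1) < 0) = Icc c (-c) := by
        ext x; simp only [hS, mem_filter, mem_Icc]; omega
      rw [eW, e3, e4, e5, if_pos (by omega), card_empty, Int.card_Icc]
      have := psi_lb_neg N B 𝔞 am d hB ha hsum h2 c hcc hc1
      have hcast : (((-c + 1 - c).toNat : ℕ) : ℤ) = 1 - 2*c := by omega
      push_cast [hcast]
      omega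
  linarith

lemma Dmono (hB : 𝔞 < B) (ha : am < 𝔞)
    (hsum : ∑ j ∈ range B, N j = d)
    (h1 : ∀ j, 1 ≤ j → j ≤ 𝔞 → 1 ≤ N j)
    (h2 : ∀ j, 1 ≤ j → j ≤ am → 2 ≤ N j)
    (h3 : N 0 + 𝔞 + am ≤ d) (h4 : 1 ≤ N 0)
    (c : ℤ) (hc1 : -(am:ℤ) ≤ c) (hc2 : c ≤ (𝔞:ℤ)) :
    Dfun N B 𝔞 c ≤ Dfun N B 𝔞 (-(am:ℤ)) := by
  obtain ⟨n, hn⟩ : ∃ n : ℕ, c = -(am:ℤ) + n := ⟨(c + am).toNat, by omega⟩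
  induction n generalizing c with
  | zero => subst hn; simp
  | succ n ih =>
    have h1' : Dfun N B 𝔞 c ≤ Dfun N B 𝔞 (c-1) :=
      Dstep N B 𝔞 am d hB ha hsum h1 h2 h3 h4 c (by omega) hc2
    exact le_trans h1' (ih (c-1) (by omega) (by omega) (by omega))

end Step
noncomputable def Sset (dd h : ℕ) (lam : Fin dd → ℝ) (j : ℕ) : Finset (Fin dd) :=
  univ.filter (fun p => h ≤ (p:ℕ) ∧ lam p = (j:ℝ))

lemma card_filter_prod {α β : Type*} [Fintype α] [Fintype β]
    (C1 : α → Prop) (C2 : α → β → Prop) [DecidablePred C1] [∀ a, DecidablePred (C2 a)] :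
    (univ.filter (fun pq : α × β => C1 pq.1 ∧ C2 pq.1 pq.2)).card
      = ∑ p ∈ univ.filter C1, (univ.filter (C2 p)).card := by
  rw [card_filter, ← Finset.univ_product_univ, Finset.sum_product, Finset.sum_filter]
  apply Finset.sum_congr rfl
  intro p _
  by_cases h : C1 p
  · simp only [h, true_and, if_true]; rw [card_filter]
  · simp [h]

section Formula
variable {dd : ℕ}

lemma head_reindex (𝔞 : ℕ) (𝔟 : ℤ) (h𝔟 : 𝔟 ≤ (𝔞:ℤ)) (h : ℕ) (hh : h = ((𝔞:ℤ)-𝔟).toNat + 1)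
    (hhd : h ≤ dd) {M : Type*} [AddCommMonoid M] (F : ℤ → M) :
    ∑ p ∈ univ.filter (fun p : Fin dd => (p:ℕ) < h), F ((𝔞:ℤ) - (p:ℕ))
      = ∑ v ∈ Icc 𝔟 (𝔞:ℤ), F v := by
  refine Finset.sum_bij'
    (i := fun (p : Fin dd) (_ : p ∈ univ.filter (fun p : Fin dd => (p:ℕ) < h)) => (𝔞:ℤ) - (p:ℕ))
    (j := fun v (hv : v ∈ Icc 𝔟 (𝔞:ℤ)) => (⟨((𝔞:ℤ) - v).toNat, by
      simp only [mem_Icc] at hv; omega⟩ : Fin dd)) ?_ ?_ ?_ ?_ ?_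
  · intro p hp; simp only [mem_filter, mem_univ, true_and] at hp; simp only [mem_Icc]; omega
  · intro v hv
    simp only [mem_filter, mem_univ, true_and]
    show ((𝔞:ℤ) - v).toNat < h
    simp only [mem_Icc] at hv; omega
  · intro p hp; simp only [mem_filter, mem_univ, true_and] at hp
    apply Fin.ext
    show ((𝔞:ℤ) - ((𝔞:ℤ) - (p:ℕ))).toNat = (p:ℕ)
    omega
  · intro v hv; simp only [mem_Icc] at hv
    show (𝔞:ℤ) - ((((𝔞:ℤ) - v).toNat : ℕ) : ℤ) = v
    omega
  · intro p hp; rfl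

lemma head_reindex_card (𝔞 : ℕ) (𝔟 : ℤ) (h𝔟 : 𝔟 ≤ (𝔞:ℤ)) (h : ℕ) (hh : h = ((𝔞:ℤ)-𝔟).toNat + 1)
    (hhd : h ≤ dd) (Q : ℤ → Prop) [DecidablePred Q] :
    (univ.filter (fun p : Fin dd => (p:ℕ) < h ∧ Q ((𝔞:ℤ) - (p:ℕ)))).card
      = ((Icc 𝔟 (𝔞:ℤ)).filter Q).card := by
  have e : univ.filter (fun p : Fin dd => (p:ℕ) < h ∧ Q ((𝔞:ℤ) - (p:ℕ)))
      = (univ.filter (fun p : Fin dd => (p:ℕ) < h)).filter (fun p : Fin dd => Q ((𝔞:ℤ) - (p:ℕ))) := by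
    rw [filter_filter]
  rw [e, card_filter, card_filter]
  exact head_reindex 𝔞 𝔟 h𝔟 h hh hhd (fun v => if Q v then 1 else 0)

lemma cfun_formula (𝔞 : ℕ) (𝔟 : ℤ) (m : ℕ → ℕ) (B : ℕ) (lam : Fin dd → ℝ)
    (h𝔟 : 𝔟 ≤ (𝔞:ℤ))
    (hlen : (((𝔞:ℤ) - 𝔟).toNat + 1) + ∑ j ∈ range B, m j = dd)
    (hlam : IsLambdaVec 𝔞 𝔟 m dd lam) :
    Cfun lam =
      (∑ v ∈ Icc 𝔟 (𝔞:ℤ), ((∑ j ∈ range B, if v < (j:ℤ) then m j else 0)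
         + (∑ j ∈ range B, if (j:ℤ) < -v then m j else 0)))
      + (((Icc 𝔟 (𝔞:ℤ)) ×ˢ (Icc 𝔟 (𝔞:ℤ))).filter fun xy : ℤ×ℤ => xy.2 < xy.1 ∧ xy.1 + xy.2 < 0).card
      + ((Icc 𝔟 (𝔞:ℤ)).filter fun v => v < 0).card := by
  obtain ⟨hhead, hmono, hcount⟩ := hlam
  set h : ℕ := ((𝔞:ℤ) - 𝔟).toNat + 1 with hh
  have hhd : h ≤ dd := by omega
  have hcount' : ∀ j, (Sset dd h lam j).card = m j := by
    intro j; rw [Sset]; exact hcount j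
  have hlamZ : ∀ p : Fin dd, (p:ℕ) < h → lam p = (((𝔞:ℤ) - (p:ℕ) : ℤ) : ℝ) := by
    intro p hp; rw [hhead p hp]; push_cast; ring
  have cardTail : (univ.filter fun p : Fin dd => h ≤ (p:ℕ)).card = dd - h := by
    rw [← Nat.card_Ico h dd]
    apply Finset.card_bij (i := fun (p : Fin dd) _ => (p:ℕ))
    · intro p hp; simp only [mem_filter, mem_univ, true_and] at hp
      simp only [mem_Ico]; exact ⟨hp, p.isLt⟩
    · intro p1 h1 p2 h2 he; exact Fin.ext he
    · intro x hx; simp only [mem_Ico] at hx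
      exact ⟨⟨x, hx.2⟩, by simp [hx.1], rfl⟩
  have hdisj : ∀ j1 j2 : ℕ, j1 ≠ j2 → Disjoint (Sset dd h lam j1) (Sset dd h lam j2) := by
    intro j1 j2 hne
    rw [Finset.disjoint_left]
    intro p hp1 hp2
    simp only [Sset, mem_filter, mem_univ, true_and] at hp1 hp2
    have : (j1:ℝ) = (j2:ℝ) := by rw [← hp1.2, hp2.2]
    exact hne (by exact_mod_cast this)
  have hcover : univ.filter (fun p : Fin dd => h ≤ (p:ℕ)) = (range B).biUnion (Sset dd h lam) := by
    refine (Finset.eq_of_subset_of_card_le ?_ ?_).symm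
    · intro p hp
      simp only [mem_biUnion, Sset, mem_filter, mem_univ, true_and, mem_range] at hp
      obtain ⟨j, _, hj, _⟩ := hp
      simp only [mem_filter, mem_univ, true_and]
      exact hj
    · rw [card_biUnion (fun j1 _ j2 _ hne => hdisj j1 j2 hne), cardTail]
      have e1 : ∑ j ∈ range B, (Sset dd h lam j).card = ∑ j ∈ range B, m j :=
        Finset.sum_congr rfl (fun j _ => hcount' j)
      omega
  have tailval : ∀ p : Fin dd, h ≤ (p:ℕ) → ∃ j, j < B ∧ lam p = (j:ℝ) := by
    intro p hp
    have hmem : p ∈ (range B).biUnion (Sset dd h lam) := by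
      rw [← hcover]; simp only [mem_filter, mem_univ, true_and]; exact hp
    simp only [mem_biUnion, Sset, mem_filter, mem_univ, true_and, mem_range] at hmem
    obtain ⟨j, hj, _, hval⟩ := hmem
    exact ⟨j, hj, hval⟩
  have tail_nonneg : ∀ p : Fin dd, h ≤ (p:ℕ) → 0 ≤ lam p := by
    intro p hp
    obtain ⟨j, _, hval⟩ := tailval p hp
    rw [hval]; positivity
  have tail_count : ∀ (P : ℝ → Prop) (_ : DecidablePred P),
      (univ.filter fun p : Fin dd => h ≤ (p:ℕ) ∧ P (lam p)).card
        = ∑ j ∈ range B, if P (j:ℝ) then m j else 0 := by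
    intro P instP
    have e : univ.filter (fun p : Fin dd => h ≤ (p:ℕ) ∧ P (lam p))
        = (range B).biUnion (fun j => if P (j:ℝ) then Sset dd h lam j else ∅) := by
      ext p
      simp only [mem_filter, mem_univ, true_and, mem_biUnion, mem_range]
      constructor
      · rintro ⟨hp, hP⟩
        obtain ⟨j, hj, hval⟩ := tailval p hp
        refine ⟨j, hj, ?_⟩
        rw [if_pos (hval ▸ hP)]
        simp only [Sset, mem_filter, mem_univ, true_and]
        exact ⟨hp, hval⟩
      · rintro ⟨j, hj, hpj⟩
        by_cases hPj : P (j:ℝ)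
        · rw [if_pos hPj] at hpj
          simp only [Sset, mem_filter, mem_univ, true_and] at hpj
          exact ⟨hpj.1, hpj.2 ▸ hPj⟩
        · rw [if_neg hPj] at hpj; simp at hpj
    rw [e, card_biUnion]
    · apply Finset.sum_congr rfl
      intro j _
      by_cases hPj : P (j:ℝ)
      · rw [if_pos hPj, if_pos hPj, hcount' j]
      · rw [if_neg hPj, if_neg hPj, card_empty]
    · intro j1 _ j2 _ hne
      show Disjoint _ _
      by_cases h1 : P (j1:ℝ) <;> by_cases h2 : P (j2:ℝ) <;>
        simp [h1, h2, hdisj j1 j2 hne]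
  -- Count 3
  have c3 : (univ.filter fun p : Fin dd => lam p < 0).card
      = ((Icc 𝔟 (𝔞:ℤ)).filter fun v => v < 0).card := by
    have e : (univ.filter fun p : Fin dd => lam p < 0)
        = univ.filter (fun p : Fin dd => (p:ℕ) < h ∧ ((𝔞:ℤ) - (p:ℕ)) < 0) := by
      ext p
      simp only [mem_filter, mem_univ, true_and]
      constructor
      · intro hp
        have hph : (p:ℕ) < h := by
          by_contra hcon; push_neg at hcon
          exact absurd hp (not_lt.mpr (tail_nonneg p hcon))
        refine ⟨hph, ?_⟩
        have := hlamZ p hph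
        rw [this] at hp
        exact_mod_cast hp
      · rintro ⟨hph, hv⟩
        rw [hlamZ p hph]
        exact_mod_cast hv
    rw [e]
    exact head_reindex_card 𝔞 𝔟 h𝔟 h hh hhd (fun v => v < 0)
  -- Count 1
  have c1 : (univ.filter fun pq : Fin dd × Fin dd => pq.1 < pq.2 ∧ lam pq.1 < lam pq.2).card
      = ∑ v ∈ Icc 𝔟 (𝔞:ℤ), ∑ j ∈ range B, if v < (j:ℤ) then m j else 0 := by
    have e : (univ.filter fun pq : Fin dd × Fin dd => pq.1 < pq.2 ∧ lam pq.1 < lam pq.2)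
        = univ.filter (fun pq : Fin dd × Fin dd =>
            (pq.1:ℕ) < h ∧ (h ≤ (pq.2:ℕ) ∧ lam pq.1 < lam pq.2)) := by
      ext ⟨p, q⟩
      simp only [mem_filter, mem_univ, true_and]
      constructor
      · rintro ⟨hpq, hlt⟩
        have hpqv : (p:ℕ) < (q:ℕ) := hpq
        have hq : h ≤ (q:ℕ) := by
          by_contra hcon; push_neg at hcon
          have hphead : (p:ℕ) < h := by omega
          rw [hlamZ p hphead, hlamZ q hcon] at hlt
          have : (𝔞:ℤ) - (p:ℕ) < (𝔞:ℤ) - (q:ℕ) := by exact_mod_cast hlt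
          omega
        have hp : (p:ℕ) < h := by
          by_contra hcon; push_neg at hcon
          have := hmono p q hcon (le_of_lt hpq)
          linarith
        exact ⟨hp, hq, hlt⟩
      · rintro ⟨hp, hq, hlt⟩
        exact ⟨Fin.lt_def.mpr (by omega), hlt⟩
    rw [e, card_filter_prod (fun p : Fin dd => (p:ℕ) < h)
      (fun (p q : Fin dd) => h ≤ (q:ℕ) ∧ lam p < lam q)]
    rw [← head_reindex 𝔞 𝔟 h𝔟 h hh hhd
      (F := fun v => ∑ j ∈ range B, if v < (j:ℤ) then m j else 0)]
    apply Finset.sum_congr rfl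
    intro p hp
    simp only [mem_filter, mem_univ, true_and] at hp
    rw [tail_count (fun x => lam p < x) (fun x => Real.decidableLT _ _)]
    apply Finset.sum_congr rfl
    intro j _
    have hiff : (lam p < (j:ℝ)) ↔ ((𝔞:ℤ) - (p:ℕ) < (j:ℤ)) := by
      rw [hlamZ p hp]
      exact_mod_cast Iff.rfl
    exact if_congr hiff rfl rfl
  -- Count 2
  have c2 : (univ.filter fun pq : Fin dd × Fin dd => pq.1 < pq.2 ∧ lam pq.1 + lam pq.2 < 0).card
      = (((Icc 𝔟 (𝔞:ℤ)) ×ˢ (Icc 𝔟 (𝔞:ℤ))).filter fun xy : ℤ×ℤ => xy.2 < xy.1 ∧ xy.1 + xy.2 < 0).card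
        + ∑ v ∈ Icc 𝔟 (𝔞:ℤ), ∑ j ∈ range B, if (j:ℤ) < -v then m j else 0 := by
    have e : (univ.filter fun pq : Fin dd × Fin dd => pq.1 < pq.2 ∧ lam pq.1 + lam pq.2 < 0)
        = (univ.filter fun pq : Fin dd × Fin dd =>
            ((pq.1:ℕ) < h ∧ (pq.2:ℕ) < h) ∧ (pq.1 < pq.2 ∧ lam pq.1 + lam pq.2 < 0))
          ∪ (univ.filter fun pq : Fin dd × Fin dd =>
            (pq.1:ℕ) < h ∧ (h ≤ (pq.2:ℕ) ∧ lam pq.1 + lam pq.2 < 0)) := by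
      ext ⟨p, q⟩
      simp only [mem_filter, mem_univ, true_and, mem_union]
      constructor
      · rintro ⟨hpq, hs⟩
        have hpqv : (p:ℕ) < (q:ℕ) := hpq
        have hp : (p:ℕ) < h := by
          by_contra hcon; push_neg at hcon
          have h1 := tail_nonneg p hcon
          have h2 := tail_nonneg q (by omega)
          linarith
        by_cases hq : (q:ℕ) < h
        · exact Or.inl ⟨⟨hp, hq⟩, hpq, hs⟩
        · exact Or.inr ⟨hp, by omega, hs⟩
      · rintro (⟨⟨hp, hq⟩, hpq, hs⟩ | ⟨hp, hq, hs⟩)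
        · exact ⟨hpq, hs⟩
        · exact ⟨Fin.lt_def.mpr (by omega), hs⟩
    rw [e, card_union_of_disjoint]
    · congr 1
      · -- head-head pairs
        apply Finset.card_bij
          (i := fun (pq : Fin dd × Fin dd) _ => (((𝔞:ℤ) - (pq.1:ℕ), (𝔞:ℤ) - (pq.2:ℕ)) : ℤ × ℤ))
        · rintro ⟨p, q⟩ hpq
          simp only [mem_filter, mem_univ, true_and] at hpq
          obtain ⟨⟨hp, hq⟩, hlt, hs⟩ := hpq
          have hpqv : (p:ℕ) < (q:ℕ) := hlt
          simp only [mem_filter, mem_product, mem_Icc]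
          rw [hlamZ p hp, hlamZ q hq] at hs
          have hsz : ((𝔞:ℤ) - (p:ℕ)) + ((𝔞:ℤ) - (q:ℕ)) < 0 := by exact_mod_cast hs
          refine ⟨⟨⟨by omega, by omega⟩, by omega, by omega⟩, by omega, hsz⟩
        · rintro ⟨p1, q1⟩ h1 ⟨p2, q2⟩ h2 he
          simp only [Prod.mk.injEq] at he
          have e1 : (p1:ℕ) = (p2:ℕ) := by omega
          have e2 : (q1:ℕ) = (q2:ℕ) := by omega
          exact Prod.ext (Fin.ext e1) (Fin.ext e2)
        · rintro ⟨x, y⟩ hxy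
          simp only [mem_filter, mem_product, mem_Icc] at hxy
          obtain ⟨⟨⟨hx1, hx2⟩, hy1, hy2⟩, hyx, hs⟩ := hxy
          refine ⟨(⟨((𝔞:ℤ) - x).toNat, by omega⟩, ⟨((𝔞:ℤ) - y).toNat, by omega⟩), ?_, ?_⟩
          · simp only [mem_filter, mem_univ, true_and]
            refine ⟨⟨?_, ?_⟩, ?_, ?_⟩
            · show ((𝔞:ℤ) - x).toNat < h; omega
            · show ((𝔞:ℤ) - y).toNat < h; omega
            · exact Fin.lt_def.mpr (by show ((𝔞:ℤ) - x).toNat < ((𝔞:ℤ) - y).toNat; omega)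
            · rw [hlamZ _ (by show ((𝔞:ℤ) - x).toNat < h; omega),
                  hlamZ _ (by show ((𝔞:ℤ) - y).toNat < h; omega)]
              have ex : ((𝔞:ℤ) - ((((𝔞:ℤ) - x).toNat : ℕ) : ℤ)) = x := by omega
              have ey : ((𝔞:ℤ) - ((((𝔞:ℤ) - y).toNat : ℕ) : ℤ)) = y := by omega
              show ((((𝔞:ℤ) - ((((𝔞:ℤ) - x).toNat : ℕ) : ℤ)) : ℤ) : ℝ)
                + ((((𝔞:ℤ) - ((((𝔞:ℤ) - y).toNat : ℕ) : ℤ)) : ℤ) : ℝ) < 0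
              rw [ex, ey]
              exact_mod_cast hs
          · simp only [Prod.mk.injEq]
            constructor <;> omega
      · -- head-tail pairs
        rw [card_filter_prod (fun p : Fin dd => (p:ℕ) < h)
          (fun (p q : Fin dd) => h ≤ (q:ℕ) ∧ lam p + lam q < 0)]
        rw [← head_reindex 𝔞 𝔟 h𝔟 h hh hhd
          (F := fun v => ∑ j ∈ range B, if (j:ℤ) < -v then m j else 0)]
        apply Finset.sum_congr rfl
        intro p hp
        simp only [mem_filter, mem_univ, true_and] at hp
        rw [tail_count (fun x => lam p + x < 0) (fun x => Real.decidableLT _ _)]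
        apply Finset.sum_congr rfl
        intro j _
        have hiff : (lam p + (j:ℝ) < 0) ↔ ((j:ℤ) < -((𝔞:ℤ) - (p:ℕ))) := by
          rw [hlamZ p hp]
          constructor
          · intro hx
            have : ((j:ℤ):ℝ) < ((-((𝔞:ℤ) - (p:ℕ)) : ℤ) : ℝ) := by push_cast; push_cast at hx; linarith
            exact_mod_cast this
          · intro hx
            have : ((j:ℤ):ℝ) < ((-((𝔞:ℤ) - (p:ℕ)) : ℤ) : ℝ) := by exact_mod_cast hx
            push_cast at this ⊢; linarith
        exact if_congr hiff rfl rfl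
    · rw [Finset.disjoint_left]
      rintro ⟨p, q⟩ hpq1 hpq2
      simp only [mem_filter, mem_univ, true_and] at hpq1 hpq2
      omega
  rw [Cfun, c1, c2, c3, Finset.sum_add_distrib]
  ring
end Formula

lemma cfun_eq_Dfun (𝔞 : ℕ) (𝔟 : ℤ) (N m : ℕ → ℕ) (B : ℕ) {dd : ℕ} (lam : Fin dd → ℝ)
    (h1 : -(𝔞:ℤ) < 𝔟) (h2 : 𝔟 ≤ (𝔞:ℤ)) (hB : 𝔞 < B)
    (hNm : ∀ j, N j = m j + segCount 𝔞 𝔟 j)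
    (hlen : (((𝔞:ℤ) - 𝔟).toNat + 1) + ∑ j ∈ range B, m j = dd)
    (hlam : IsLambdaVec 𝔞 𝔟 m dd lam) :
    (Cfun lam : ℤ) = Dfun N B 𝔞 𝔟 := by
  rw [cfun_formula 𝔞 𝔟 m B lam h2 hlen hlam]

  unfold Dfun
  have key : ∀ v ∈ Icc 𝔟 (𝔞:ℤ), psiSum N B v - (Wcard 𝔞 𝔟 v : ℤ)
      = ((∑ j ∈ range B, if v < (j:ℤ) then m j else 0 : ℕ) : ℤ)
        + ((∑ j ∈ range B, if (j:ℤ) < -v then m j else 0 : ℕ) : ℤ) := by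
    intro v _
    have e1 : (∑ j ∈ range B, if v < (j:ℤ) then (N j : ℤ) else 0)
        = (∑ j ∈ range B, if v < (j:ℤ) then (m j : ℤ) else 0)
          + (∑ j ∈ range B, if v < (j:ℤ) then (segCount 𝔞 𝔟 j : ℤ) else 0) := by
      rw [← Finset.sum_add_distrib]
      apply Finset.sum_congr rfl; intro j _
      rw [hNm j]; push_cast; split_ifs <;> ring
    have e2 : (∑ j ∈ range B, if (j:ℤ) < -v then (N j : ℤ) else 0)
        = (∑ j ∈ range B, if (j:ℤ) < -v then (m j : ℤ) else 0)
          + (∑ j ∈ range B, if (j:ℤ) < -v then (segCount 𝔞 𝔟 j : ℤ) else 0) := by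
      rw [← Finset.sum_add_distrib]
      apply Finset.sum_congr rfl; intro j _
      rw [hNm j]; push_cast; split_ifs <;> ring
    have s1 : (∑ j ∈ range B, if v < (j:ℤ) then (segCount 𝔞 𝔟 j : ℤ) else 0)
        = (((Icc 𝔟 (𝔞:ℤ)).filter fun k => v < (k.natAbs:ℤ)).card : ℤ) := by
      exact_mod_cast seg_sum 𝔞 𝔟 h1 B hB (fun j => v < (j:ℤ))
    have s2 : (∑ j ∈ range B, if (j:ℤ) < -v then (segCount 𝔞 𝔟 j : ℤ) else 0)
        = (((Icc 𝔟 (𝔞:ℤ)).filter fun k => (k.natAbs:ℤ) < -v).card : ℤ) := by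
      exact_mod_cast seg_sum 𝔞 𝔟 h1 B hB (fun j => (j:ℤ) < -v)
    unfold psiSum Wcard
    rw [e1, e2, s1, s2]
    push_cast
    ring
  rw [Finset.sum_congr rfl key]
  push_cast [Finset.sum_add_distrib]
  ring
def skipJumps {r : ℕ} (a : Fin r → ℕ) (i : ℕ) (k : Fin (r-2)) : ℕ :=
  if _ : (k:ℕ) < i then a ⟨(k:ℕ), by have := k.2; omega⟩
  else a ⟨(k:ℕ)+2, by have := k.2; omega⟩

section Skip
variable {r : ℕ} (a : Fin r → ℕ)

lemma jump_count_skip (hanti : StrictAnti a) (I I1 : Fin r)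
    (hIv : (I1:ℕ) = (I:ℕ) + 1) (j : ℕ) :
    (univ.filter fun k : Fin (r-2) => j ≤ skipJumps a (I:ℕ) k).card
      + ((if j ≤ a I then 1 else 0) + (if j ≤ a I1 then 1 else 0))
      = (univ.filter fun k : Fin r => j ≤ a k).card := by
  set i : ℕ := (I:ℕ) with hidef
  set F := univ.filter (fun k : Fin r => j ≤ a k) with hF
  have hII1 : I < I1 := by rw [Fin.lt_def]; omega
  have key : (univ.filter fun k : Fin (r-2) => j ≤ skipJumps a i k).card
      = ((F.erase I).erase I1).card := by
    apply Finset.card_bij (i := fun (k : Fin (r-2)) _ =>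
      if _ : (k:ℕ) < i then (⟨(k:ℕ), by have := k.2; omega⟩ : Fin r)
      else ⟨(k:ℕ)+2, by have := k.2; omega⟩)
    · intro k hk
      simp only [mem_filter, mem_univ, true_and] at hk; unfold skipJumps at hk
      by_cases hki : (k:ℕ) < i
      · rw [dif_pos hki] at hk ⊢
        simp only [Finset.mem_erase, hF, mem_filter, mem_univ, true_and]
        refine ⟨?_, ?_, hk⟩
        · rw [Fin.ne_iff_vne]; show ¬ ((k:ℕ) = (I1:ℕ)); omega
        · rw [Fin.ne_iff_vne]; show ¬ ((k:ℕ) = (I:ℕ)); omega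
      · rw [dif_neg hki] at hk ⊢
        simp only [Finset.mem_erase, hF, mem_filter, mem_univ, true_and]
        have hk2 := k.2
        refine ⟨?_, ?_, hk⟩
        · rw [Fin.ne_iff_vne]; show ¬ ((k:ℕ) + 2 = (I1:ℕ)); omega
        · rw [Fin.ne_iff_vne]; show ¬ ((k:ℕ) + 2 = (I:ℕ)); omega
    · intro k1 h1 k2 h2 he
      by_cases c1 : (k1:ℕ) < i <;> by_cases c2 : (k2:ℕ) < i
      · rw [dif_pos c1, dif_pos c2] at he; simp only [Fin.mk.injEq] at he
        exact Fin.ext he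
      · rw [dif_pos c1, dif_neg c2] at he; simp only [Fin.mk.injEq] at he; omega
      · rw [dif_neg c1, dif_pos c2] at he; simp only [Fin.mk.injEq] at he; omega
      · rw [dif_neg c1, dif_neg c2] at he; simp only [Fin.mk.injEq] at he
        exact Fin.ext (by omega)
    · intro x hx
      simp only [Finset.mem_erase, hF, mem_filter, mem_univ, true_and] at hx
      obtain ⟨hx1, hx2, hx3⟩ := hx
      have xne1 : (x:ℕ) ≠ (I1:ℕ) := fun hc => hx1 (Fin.ext hc)
      have xne2 : (x:ℕ) ≠ (I:ℕ) := fun hc => hx2 (Fin.ext hc)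
      by_cases hxi : (x:ℕ) < i
      · have hxr : (x:ℕ) < r - 2 := by have := I1.2; omega
        refine ⟨⟨(x:ℕ), hxr⟩, ?_, ?_⟩
        · simp only [mem_filter, mem_univ, true_and]; unfold skipJumps
          rw [dif_pos (show (((⟨(x:ℕ), hxr⟩ : Fin (r-2))):ℕ) < i from hxi)]
          have hxx : (⟨(x:ℕ), by have := hxr; omega⟩ : Fin r) = x := Fin.ext rfl
          rw [hxx]; exact hx3
        · rw [dif_pos (show (((⟨(x:ℕ), hxr⟩ : Fin (r-2))):ℕ) < i from hxi)]
      · have hge : i + 2 ≤ (x:ℕ) := by omega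
        have hxlt : (x:ℕ) - 2 < r - 2 := by have := x.2; omega
        refine ⟨⟨(x:ℕ) - 2, hxlt⟩, ?_, ?_⟩
        · simp only [mem_filter, mem_univ, true_and]; unfold skipJumps
          rw [dif_neg (show ¬(((⟨(x:ℕ) - 2, hxlt⟩ : Fin (r-2))):ℕ) < i by show ¬ ((x:ℕ) - 2 < i); omega)]
          have hxx : (⟨(x:ℕ) - 2 + 2, by have := hxlt; omega⟩ : Fin r) = x := Fin.ext (by show (x:ℕ) - 2 + 2 = (x:ℕ); omega)
          rw [hxx]; exact hx3
        · rw [dif_neg (show ¬(((⟨(x:ℕ) - 2, hxlt⟩ : Fin (r-2))):ℕ) < i by show ¬ ((x:ℕ) - 2 < i); omega)]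
          exact Fin.ext (by show (x:ℕ) - 2 + 2 = (x:ℕ); omega)
  rw [key]
  by_cases h1 : j ≤ a I
  · have hIF : I ∈ F := by simp [hF, h1]
    by_cases h2 : j ≤ a I1
    · have hI1F : I1 ∈ F.erase I := by
        simp only [Finset.mem_erase, hF, mem_filter, mem_univ, true_and]
        exact ⟨ne_of_gt hII1, h2⟩
      rw [if_pos h1, if_pos h2]
      have e1 := Finset.card_erase_add_one hI1F
      have e2 := Finset.card_erase_add_one hIF
      omega
    · have hnm : I1 ∉ F.erase I := by
        simp only [Finset.mem_erase, hF, mem_filter, mem_univ, true_and]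
        intro hc; exact h2 hc.2
      rw [Finset.erase_eq_of_notMem hnm, if_pos h1, if_neg h2]
      have e2 := Finset.card_erase_add_one hIF
      omega
  · have h2 : ¬ j ≤ a I1 := fun hc => h1 (le_trans hc (le_of_lt (hanti hII1)))
    have hnm1 : I ∉ F := by simp [hF, h1]
    have hnm2 : I1 ∉ F := by simp [hF, h2]
    rw [Finset.erase_eq_of_notMem hnm1, Finset.erase_eq_of_notMem hnm2,
      if_neg h1, if_neg h2]
    omega
end Skip

section Main
variable (N : ℕ → ℕ) {r : ℕ} (a : Fin r → ℕ)

lemma remove_admissible (hr : 3 ≤ r)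
    (hodd : Odd r) (hanti : StrictAnti a)
    (hcnt : ∀ j : ℕ, 1 ≤ j → N j = (univ.filter fun k : Fin r => j ≤ a k).card)
    (h0 : N 0 = (r-1)/2)
    (I I1 : Fin r) (hIv : (I1:ℕ) = (I:ℕ) + 1) :
    IsResidualSegmentB (fun j => N j - segCount (a I) (-(a I1 : ℤ)) j)
    ∧ ∀ j, segCount (a I) (-(a I1 : ℤ)) j ≤ N j := by
  have hII1 : I < I1 := by rw [Fin.lt_def]; omega
  have haa : a I1 < a I := hanti hII1
  have hbound : -((a I : ℕ):ℤ) < -((a I1 : ℕ):ℤ) := by omega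
  have hseg : ∀ j : ℕ, 1 ≤ j → segCount (a I) (-(a I1 : ℤ)) j
      = (if j ≤ a I then 1 else 0) + (if j ≤ a I1 then 1 else 0) := by
    intro j hj
    rw [segCount_pos_eq (a I) (-(a I1 : ℤ)) j hj hbound]
    congr 1
    · congr 1
      simp only [eq_iff_iff]
      omega
    · congr 1
      simp only [eq_iff_iff]
      omega
  have hmemI : ∀ j : ℕ, 1 ≤ j → j ≤ a I →
      ((if j ≤ a I then 1 else 0) + (if j ≤ a I1 then 1 else 0)) ≤ N j := by
    intro j hj hja
    rw [hcnt j hj]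
    by_cases h2 : j ≤ a I1
    · rw [if_pos hja, if_pos h2]
      have hsub : ({I, I1} : Finset (Fin r)) ⊆ univ.filter (fun k => j ≤ a k) := by
        intro x hx
        simp only [Finset.mem_insert, Finset.mem_singleton] at hx
        rcases hx with rfl | rfl <;> simp [hja, h2]
      have hc2 : ({I, I1} : Finset (Fin r)).card = 2 := by
        rw [Finset.card_insert_of_notMem (by simp [ne_of_lt hII1]), Finset.card_singleton]
      calc 1 + 1 = ({I, I1} : Finset (Fin r)).card := by omega
        _ ≤ _ := Finset.card_le_card hsub
    · rw [if_pos hja, if_neg h2]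
      have hm : I ∈ univ.filter (fun k => j ≤ a k) := by simp [hja]
      have := Finset.card_pos.mpr ⟨I, hm⟩
      omega
  have hsegle : ∀ j, segCount (a I) (-(a I1 : ℤ)) j ≤ N j := by
    intro j
    rcases Nat.eq_zero_or_pos j with rfl | hj
    · rw [segCount_zero _ _ (by omega)]
      rw [h0]; omega
    · rw [hseg j hj]
      by_cases hja : j ≤ a I
      · exact hmemI j hj hja
      · rw [if_neg hja, if_neg (by omega)]
        omega
  refine ⟨⟨r - 2, skipJumps a (I:ℕ), ?_, ?_, ?_, ?_⟩, hsegle⟩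
  · rcases hodd with ⟨t, ht⟩
    exact ⟨t - 1, by omega⟩
  · intro k l hkl
    have hkl' : (k:ℕ) < (l:ℕ) := hkl
    unfold skipJumps
    by_cases ck : (k:ℕ) < (I:ℕ) <;> by_cases cl : (l:ℕ) < (I:ℕ)
    · rw [dif_pos ck, dif_pos cl]
      exact hanti (show _ < _ by rw [Fin.lt_def]; show (k:ℕ) < (l:ℕ); omega)
    · rw [dif_pos ck, dif_neg cl]
      exact hanti (show _ < _ by rw [Fin.lt_def]; show (k:ℕ) < (l:ℕ) + 2; omega)
    · omega
    · rw [dif_neg ck, dif_neg cl]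
      exact hanti (show _ < _ by rw [Fin.lt_def]; show (k:ℕ) + 2 < (l:ℕ) + 2; omega)
  · intro j hj
    have hks := jump_count_skip a hanti I I1 hIv j
    have hNj := hcnt j hj
    have hsg := hseg j hj
    have hle := hsegle j
    show N j - segCount (a I) (-(a I1 : ℤ)) j = _
    omega
  · show N 0 - segCount (a I) (-(a I1 : ℤ)) 0 = (r - 2 - 1) / 2
    rw [segCount_zero _ _ (by omega), h0]
    rcases hodd with ⟨t, ht⟩
    omega
end Main
section S7
variable (N : ℕ → ℕ) {r : ℕ} (a : Fin r → ℕ)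

lemma Nfact1 (hcnt : ∀ j : ℕ, 1 ≤ j → N j = (univ.filter fun k : Fin r => j ≤ a k).card)
    (I : Fin r) : ∀ j, 1 ≤ j → j ≤ a I → 1 ≤ N j := by
  intro j hj hja
  rw [hcnt j hj]
  exact Finset.card_pos.mpr ⟨I, by simp [hja]⟩

lemma Nfact2 (hanti : StrictAnti a)
    (hcnt : ∀ j : ℕ, 1 ≤ j → N j = (univ.filter fun k : Fin r => j ≤ a k).card)
    (I I1 : Fin r) (hIv : (I1:ℕ) = (I:ℕ) + 1) :
    ∀ j, 1 ≤ j → j ≤ a I1 → 2 ≤ N j := by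
  intro j hj hja
  have hII1 : I < I1 := by rw [Fin.lt_def]; omega
  have haa : a I1 < a I := hanti hII1
  rw [hcnt j hj]
  have hsub : ({I, I1} : Finset (Fin r)) ⊆ univ.filter (fun k => j ≤ a k) := by
    intro x hx
    simp only [Finset.mem_insert, Finset.mem_singleton] at hx
    rcases hx with rfl | rfl
    · simp only [mem_filter, mem_univ, true_and]; omega
    · simp only [mem_filter, mem_univ, true_and]; exact hja
  have hc2 : ({I, I1} : Finset (Fin r)).card = 2 := by
    rw [Finset.card_insert_of_notMem (by simp [ne_of_lt hII1]), Finset.card_singleton]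
  calc 2 = ({I, I1} : Finset (Fin r)).card := hc2.symm
    _ ≤ _ := Finset.card_le_card hsub

lemma char_lemma (mb : ℕ → ℕ) (hanti : StrictAnti a)
    (hcnt : ∀ j : ℕ, 1 ≤ j → N j = (univ.filter fun k : Fin r => j ≤ a k).card)
    (I I1 : Fin r) (hIv : (I1:ℕ) = (I:ℕ) + 1)
    (𝔟 : ℤ) (h1 : 𝔟 < (a I:ℤ)) (h2 : 0 < (a I:ℤ) + 𝔟)
    (hres : IsResidualSegmentB mb)
    (hNmb : ∀ j, N j = mb j + segCount (a I) 𝔟 j) :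
    -((a I1 : ℕ):ℤ) ≤ 𝔟 := by
  by_cases hbn : 0 ≤ 𝔟
  · have : (0:ℤ) ≤ (a I1 : ℕ) := by positivity
    omega
  · push_neg at hbn
    set t : ℕ := (-𝔟).toNat with ht
    have ht1 : 1 ≤ t := by omega
    have htA : (t:ℤ) < (a I : ℕ) := by omega
    obtain ⟨r', b, hodd', hanti', hcnt', h0'⟩ := hres
    have hmb_mono : mb (t+1) ≤ mb t := by
      rw [hcnt' t ht1, hcnt' (t+1) (by omega)]
      apply card_le_card
      intro x hx; simp only [mem_filter, mem_univ, true_and] at hx ⊢; omega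
    have hsegt : segCount (a I) 𝔟 t = 2 := by
      rw [segCount_pos_eq _ _ _ ht1 (by omega)]
      rw [if_pos ⟨by omega, by omega⟩, if_pos (by omega)]
    have hsegt1 : segCount (a I) 𝔟 (t+1) = 1 := by
      rw [segCount_pos_eq _ _ _ (by omega) (by omega)]
      rw [if_pos ⟨by omega, by omega⟩, if_neg (by omega)]
    have hNt := hNmb t
    have hNt1 := hNmb (t+1)
    have hdrop : N (t+1) + 1 ≤ N t := by omega
    have hsub : (univ.filter fun k : Fin r => t+1 ≤ a k) ⊆ (univ.filter fun k : Fin r => t ≤ a k) := by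
      intro x hx; simp only [mem_filter, mem_univ, true_and] at hx ⊢; omega
    have hltc : (univ.filter fun k : Fin r => t+1 ≤ a k).card < (univ.filter fun k : Fin r => t ≤ a k).card := by
      rw [← hcnt t ht1, ← hcnt (t+1) (by omega)]; omega
    have hne : (univ.filter fun k : Fin r => t+1 ≤ a k) ≠ (univ.filter fun k : Fin r => t ≤ a k) := by
      intro he; rw [he] at hltc; exact lt_irrefl _ hltc
    obtain ⟨k, hk1, hk2⟩ := Finset.exists_of_ssubset (lt_of_le_of_ne hsub hne)
    simp only [mem_filter, mem_univ, true_and] at hk1 hk2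
    have hak : a k = t := by omega
    have hIk : I < k := by
      by_contra hcon
      push_neg at hcon
      have := hanti.antitone hcon
      omega
    have hI1k : I1 ≤ k := by
      rw [Fin.le_def]; rw [Fin.lt_def] at hIk; omega
    have := hanti.antitone hI1k
    omega

lemma dbound (B d 𝔞 am : ℕ) (hB : 𝔞 < B) (ham : am < 𝔞)
    (hsum : ∑ j ∈ range B, N j = d)
    (h1 : ∀ j, 1 ≤ j → j ≤ 𝔞 → 1 ≤ N j) (h2 : ∀ j, 1 ≤ j → j ≤ am → 2 ≤ N j) :
    N 0 + 𝔞 + am ≤ d := by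
  have hsplit : ∑ j ∈ range B, N j = N 0 + ∑ j ∈ Ico 1 B, N j := by
    have h0m : (0:ℕ) ∈ range B := by simp; omega
    rw [← Finset.add_sum_erase _ N h0m]
    congr 1
    have he : (range B).erase 0 = Ico 1 B := by
      ext j; simp only [Finset.mem_erase, mem_range, mem_Ico]; omega
    rw [he]
  have hcard : ∀ c : ℕ, c < B → ∑ j ∈ Ico 1 B, (if j ≤ c then 1 else 0) = c := by
    intro c hc
    rw [← Finset.card_filter]
    have : (Ico 1 B).filter (fun j => j ≤ c) = Icc 1 c := by
      ext j; simp only [mem_filter, mem_Ico, mem_Icc]; omega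
    rw [this, Nat.card_Icc]
    omega
  have hle : ∑ j ∈ Ico 1 B, ((if j ≤ 𝔞 then 1 else 0) + (if j ≤ am then 1 else 0))
      ≤ ∑ j ∈ Ico 1 B, N j := by
    apply Finset.sum_le_sum
    intro j hj
    simp only [mem_Ico] at hj
    by_cases hja : j ≤ 𝔞
    · by_cases hjm : j ≤ am
      · rw [if_pos hja, if_pos hjm]
        exact h2 j (by omega) hjm
      · rw [if_pos hja, if_neg hjm]
        have := h1 j (by omega) hja
        omega
    · rw [if_neg hja, if_neg (by omega)]
      omega
  rw [Finset.sum_add_distrib, hcard 𝔞 hB, hcard am (by omega)] at hle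
  omega
end S7

/-- For a residual segment `N` of type B of length `d ≥ 1` with Jumps
`a 0 > a 1 > … > a (r-1)` (`r ≥ 3`) and consecutive Jumps `𝔞 = a i`, `a_- = a (i+1)`:
`𝔟 = -a_-` is admissible, and the count `C` is maximal at `λ_{-a_-}` among all `λ_𝔟`
with `𝔟` admissible. -/
theorem statement7 (N : ℕ → ℕ) (r : ℕ) (a : Fin r → ℕ) (hr : 3 ≤ r)
    (hN : ResidualBData N r a)
    (d : ℕ) (hd1 : 1 ≤ d)
    (hd : ∃ B : ℕ, (∀ j, B ≤ j → N j = 0) ∧ ∑ j ∈ Finset.range B, N j = d)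
    (i : Fin r) (hi : (i : ℕ) + 1 < r) :
    AdmissibleB N (a i) (-(a ⟨(i : ℕ) + 1, hi⟩ : ℤ)) ∧
    ∀ (𝔟 : ℤ) (mb ma : ℕ → ℕ),
      (𝔟 < (a i : ℤ) ∧ 0 < (a i : ℤ) + 𝔟 ∧ IsResidualSegmentB mb ∧
        ∀ j : ℕ, N j = mb j + segCount (a i) 𝔟 j) →
      (IsResidualSegmentB ma ∧
        ∀ j : ℕ, N j = ma j + segCount (a i) (-(a ⟨(i : ℕ) + 1, hi⟩ : ℤ)) j) →
      ∀ (lamb lama : Fin d → ℝ),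
        IsLambdaVec (a i) 𝔟 mb d lamb →
        IsLambdaVec (a i) (-(a ⟨(i : ℕ) + 1, hi⟩ : ℤ)) ma d lama →
        Cfun lamb ≤ Cfun lama := by
  obtain ⟨hodd, hanti, hcnt, h0⟩ := hN
  obtain ⟨B₀, hB₀, hsum₀⟩ := hd
  set I1 : Fin r := ⟨(i:ℕ)+1, hi⟩ with hI1def
  have hIv : (I1:ℕ) = (i:ℕ) + 1 := rfl
  have hII1 : i < I1 := by rw [Fin.lt_def]; omega
  have haa : a I1 < a i := hanti hII1
  have h𝔞1 : 1 ≤ a i := by omega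
  set B : ℕ := max B₀ (a i + 1) with hBdef
  have hB : a i < B := by omega
  have hNB : ∀ j, B ≤ j → N j = 0 := fun j hj => hB₀ j (by omega)
  have hsum : ∑ j ∈ Finset.range B, N j = d := by
    rw [← hsum₀]
    refine (Finset.sum_subset ?_ ?_).symm
    · intro x hx; simp only [Finset.mem_range] at hx ⊢; omega
    · intro x hx hnx
      simp only [Finset.mem_range] at hx hnx
      exact hB₀ x (by omega)
  obtain ⟨hres_ma, hsegle⟩ :=
    remove_admissible N a hr hodd hanti hcnt h0 i I1 hIv
  have hadmB : AdmissibleB N (a i) (-(a I1 : ℤ)) := by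
    refine ⟨by push_cast; omega, by push_cast; omega,
      fun j => N j - segCount (a i) (-(a I1 : ℤ)) j, hres_ma, fun j => ?_⟩
    show N j = N j - segCount (a i) (-(a I1 : ℤ)) j + segCount (a i) (-(a I1 : ℤ)) j
    have := hsegle j; omega
  refine ⟨hadmB, ?_⟩
  intro 𝔟 mb ma hmb hma lamb lama hlb hla
  obtain ⟨h𝔟1, h𝔟2, hresb, hNmb⟩ := hmb
  obtain ⟨hresa, hNma⟩ := hma
  have hf1 : ∀ j, 1 ≤ j → j ≤ a i → 1 ≤ N j := Nfact1 N a hcnt i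
  have hf2 : ∀ j, 1 ≤ j → j ≤ a I1 → 2 ≤ N j := Nfact2 N a hanti hcnt i I1 hIv
  have hd3 : N 0 + a i + a I1 ≤ d := dbound N B d (a i) (a I1) hB haa hsum hf1 hf2
  have h40 : 1 ≤ N 0 := by rw [h0]; omega
  have hb1 : -((a i : ℕ):ℤ) < 𝔟 := by omega
  have hlenb : (((a i:ℤ) - 𝔟).toNat + 1) + ∑ j ∈ Finset.range B, mb j = d := by
    have hst : ∑ j ∈ Finset.range B, segCount (a i) 𝔟 j = ((a i:ℤ) - 𝔟).toNat + 1 :=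
      seg_total (a i) 𝔟 hb1 (by omega) B hB
    have hsN : ∑ j ∈ Finset.range B, N j
        = ∑ j ∈ Finset.range B, mb j + ∑ j ∈ Finset.range B, segCount (a i) 𝔟 j := by
      rw [← Finset.sum_add_distrib]
      exact Finset.sum_congr rfl (fun j _ => hNmb j)
    omega
  have ha1 : -((a i : ℕ):ℤ) < -(a I1 : ℤ) := by push_cast; omega
  have ha2 : -(a I1 : ℤ) ≤ (a i : ℤ) := by push_cast; omega
  have hlena : (((a i:ℤ) - (-(a I1 : ℤ))).toNat + 1) + ∑ j ∈ Finset.range B, ma j = d := by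
    have hst : ∑ j ∈ Finset.range B, segCount (a i) (-(a I1 : ℤ)) j
        = ((a i:ℤ) - (-(a I1 : ℤ))).toNat + 1 :=
      seg_total (a i) (-(a I1 : ℤ)) ha1 ha2 B hB
    have hsN : ∑ j ∈ Finset.range B, N j
        = ∑ j ∈ Finset.range B, ma j + ∑ j ∈ Finset.range B, segCount (a i) (-(a I1 : ℤ)) j := by
      rw [← Finset.sum_add_distrib]
      exact Finset.sum_congr rfl (fun j _ => hNma j)
    omega
  have hCb : (Cfun lamb : ℤ) = Dfun N B (a i) 𝔟 :=
    cfun_eq_Dfun (a i) 𝔟 N mb B lamb hb1 (le_of_lt h𝔟1) hB hNmb hlenb hlb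
  have hCa : (Cfun lama : ℤ) = Dfun N B (a i) (-(a I1 : ℤ)) :=
    cfun_eq_Dfun (a i) (-(a I1 : ℤ)) N ma B lama ha1 ha2 hB hNma hlena hla
  have hchar : -((a I1 : ℕ):ℤ) ≤ 𝔟 :=
    char_lemma N a mb hanti hcnt i I1 hIv 𝔟 h𝔟1 h𝔟2 hresb hNmb
  have hmono := Dmono N B (a i) (a I1) d hB haa hsum hf1 hf2 hd3 h40 𝔟 hchar (le_of_lt h𝔟1)
  have : (Cfun lamb : ℤ) ≤ (Cfun lama : ℤ) := by rw [hCb, hCa]; exact hmono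
  exact_mod_cast this
end

section
/- Let n be a residual segment of type B with Jumps a_1 > a_2 > … > a_r (r odd, r ≥ 3), and fix 1 ≤ i < r, so that a_i > a_{i+1} are two consecutive Jumps. Then: (1) there is a (unique) function n′ : ℕ → ℕ satisfying n(j) = n′(j) + (1 if a_{i+1} < j ≤ a_i) + (2 if 1 ≤ j ≤ a_{i+1}) + (1 if j = 0) for every j ∈ ℕ, and n′ is the multiplicity function of a residual segment of type B whose set of Jumps is {a_1, …, a_r} ∖ {a_i, a_{i+1}}; (2) for every c ∈ ℕ there is no residual segment m of type B satisfying n′(j) = m(j) + (2 if 1 ≤ j ≤ c) + (1 if j = 0) for every j ∈ ℕ, i.e. no further symmetric linear segment (c, c−1, …, −c) can be extracted from n′ so as to leave a residual segment of type B. -/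
private def emb {r : ℕ} (i : Fin r) (hi : (i : ℕ) + 1 < r) (k : Fin (r - 2)) : Fin r :=
  if _h : (k : ℕ) < (i : ℕ) then ⟨k, by omega⟩ else ⟨(k : ℕ) + 2, by have := k.2; omega⟩

private lemma emb_coe {r : ℕ} (i : Fin r) (hi : (i : ℕ) + 1 < r) (k : Fin (r - 2)) :
    (emb i hi k : ℕ) = if (k : ℕ) < (i : ℕ) then (k : ℕ) else (k : ℕ) + 2 := by
  unfold emb; split <;> rfl

private lemma emb_strictMono {r : ℕ} (i : Fin r) (hi : (i : ℕ) + 1 < r) :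
    StrictMono (emb i hi) := by
  intro k l h
  rw [Fin.lt_def, emb_coe, emb_coe]
  rw [Fin.lt_def] at h
  split_ifs <;> omega

private lemma emb_ne {r : ℕ} (i : Fin r) (hi : (i : ℕ) + 1 < r) (k : Fin (r - 2)) :
    (emb i hi k : ℕ) ≠ (i : ℕ) ∧ (emb i hi k : ℕ) ≠ (i : ℕ) + 1 := by
  rw [emb_coe]; split <;> omega

private lemma emb_surj {r : ℕ} (i : Fin r) (hi : (i : ℕ) + 1 < r) (t : Fin r)
    (h1 : t ≠ i) (h2 : t ≠ ⟨(i : ℕ) + 1, hi⟩) : ∃ k, emb i hi k = t := by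
  have h1' : (t : ℕ) ≠ (i : ℕ) := fun h => h1 (Fin.ext h)
  have h2' : (t : ℕ) ≠ (i : ℕ) + 1 := fun h => h2 (Fin.ext h)
  have ht := t.2
  by_cases h : (t : ℕ) < (i : ℕ)
  · refine ⟨⟨t, by omega⟩, Fin.ext ?_⟩
    rw [emb_coe]
    show (if (t : ℕ) < (i : ℕ) then (t : ℕ) else (t : ℕ) + 2) = (t : ℕ)
    split_ifs <;> omega
  · refine ⟨⟨(t : ℕ) - 2, by omega⟩, Fin.ext ?_⟩
    rw [emb_coe]
    show (if (t : ℕ) - 2 < (i : ℕ) then (t : ℕ) - 2 else (t : ℕ) - 2 + 2) = (t : ℕ)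
    split_ifs <;> omega

private lemma split_card {r : ℕ} (a : Fin r → ℕ) (i : Fin r) (hi : (i : ℕ) + 1 < r)
    (P : ℕ → Prop) [DecidablePred P] :
    (Finset.univ.filter fun k : Fin r => P (a k)).card
      = (Finset.univ.filter fun k : Fin (r - 2) => P (a (emb i hi k))).card
        + ((if P (a i) then 1 else 0) + (if P (a ⟨(i : ℕ) + 1, hi⟩) then 1 else 0)) := by
  classical
  set i' : Fin r := ⟨(i : ℕ) + 1, hi⟩ with hi'
  have hne : i ≠ i' := by
    intro h
    have := congrArg Fin.val h
    simp [hi'] at this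
  let E : Fin (r - 2) ↪ Fin r := ⟨emb i hi, (emb_strictMono i hi).injective⟩
  have hcover : (Finset.univ.map E) ∪ ({i, i'} : Finset (Fin r)) = Finset.univ := by
    apply Finset.eq_univ_iff_forall.mpr
    intro t
    simp only [Finset.mem_union, Finset.mem_map, Finset.mem_univ, true_and,
      Finset.mem_insert, Finset.mem_singleton]
    by_cases h1 : t = i
    · exact Or.inr (Or.inl h1)
    by_cases h2 : t = i'
    · exact Or.inr (Or.inr h2)
    · exact Or.inl (emb_surj i hi t h1 h2)
  have hdisj : Disjoint (Finset.univ.map E) ({i, i'} : Finset (Fin r)) := by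
    rw [Finset.disjoint_left]
    intro t htm hts
    simp only [Finset.mem_map, Finset.mem_univ, true_and] at htm
    simp only [Finset.mem_insert, Finset.mem_singleton] at hts
    obtain ⟨k, rfl⟩ := htm
    have := emb_ne i hi k
    rcases hts with h | h
    · exact this.1 (congrArg Fin.val h)
    · exact this.2 (congrArg Fin.val h)
  rw [← hcover, Finset.filter_union,
    Finset.card_union_of_disjoint (hdisj.mono (Finset.filter_subset _ _) (Finset.filter_subset _ _))]
  congr 1
  · rw [Finset.filter_map, Finset.card_map]
    rfl
  · rw [Finset.filter_insert, Finset.filter_singleton]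
    by_cases h1 : P (a i) <;> by_cases h2 : P (a i') <;>
      simp [h1, h2, hne]

private lemma card_le_succ {s : ℕ} (f : Fin s → ℕ) (hf : Function.Injective f) (v : ℕ) :
    (Finset.univ.filter fun k => v ≤ f k).card
      ≤ (Finset.univ.filter fun k => v + 1 ≤ f k).card + 1 := by
  classical
  have hsub : (Finset.univ.filter fun k => v ≤ f k)
      ⊆ (Finset.univ.filter fun k => v + 1 ≤ f k) ∪ (Finset.univ.filter fun k => f k = v) := by
    intro k hk
    simp only [Finset.mem_filter, Finset.mem_univ, true_and, Finset.mem_union] at *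
    omega
  have h1 : (Finset.univ.filter fun k => f k = v).card ≤ 1 := by
    refine Finset.card_le_one.mpr ?_
    intro k hk l hl
    simp only [Finset.mem_filter, Finset.mem_univ, true_and] at hk hl
    exact hf (hk.trans hl.symm)
  calc (Finset.univ.filter fun k => v ≤ f k).card
      ≤ ((Finset.univ.filter fun k => v + 1 ≤ f k) ∪ (Finset.univ.filter fun k => f k = v)).card :=
        Finset.card_le_card hsub
    _ ≤ (Finset.univ.filter fun k => v + 1 ≤ f k).card
          + (Finset.univ.filter fun k => f k = v).card := Finset.card_union_le _ _
    _ ≤ _ := by omega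

/-- Withdrawing the linear segment `(a i, …, -a (i+1))` attached to two
consecutive Jumps of a type-B residual segment `n` leaves a unique multiplicity function
`n'`; it is a residual segment of type B whose Jumps are those of `n` with `a i` and
`a (i+1)` removed, and no further symmetric linear segment `(c, c-1, …, -c)` can be
withdrawn from `n'` so as to leave a residual segment of type B. -/
theorem statement9 (n : ℕ → ℕ) (r : ℕ) (a : Fin r → ℕ) (hr : 3 ≤ r)
    (hn : ResidualBData n r a)
    (i : Fin r) (hi : (i : ℕ) + 1 < r) :
    (∃! n' : ℕ → ℕ, ∀ j : ℕ,
        n j = n' j + (if a ⟨(i : ℕ) + 1, hi⟩ < j ∧ j ≤ a i then 1 else 0)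
          + (if 1 ≤ j ∧ j ≤ a ⟨(i : ℕ) + 1, hi⟩ then 2 else 0)
          + (if j = 0 then 1 else 0)) ∧
    ∀ n' : ℕ → ℕ,
      (∀ j : ℕ,
        n j = n' j + (if a ⟨(i : ℕ) + 1, hi⟩ < j ∧ j ≤ a i then 1 else 0)
          + (if 1 ≤ j ∧ j ≤ a ⟨(i : ℕ) + 1, hi⟩ then 2 else 0)
          + (if j = 0 then 1 else 0)) →
      (∃ a' : Fin (r - 2) → ℕ, ResidualBData n' (r - 2) a' ∧
        Set.range a' = Set.range a \ {a i, a ⟨(i : ℕ) + 1, hi⟩}) ∧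
      ∀ c : ℕ, ¬ ∃ m : ℕ → ℕ, IsResidualSegmentB m ∧
        ∀ j : ℕ, n' j = m j + (if 1 ≤ j ∧ j ≤ c then 2 else 0)
          + (if j = 0 then 1 else 0) := by
  classical
  obtain ⟨hodd, hanti, hcount, h0⟩ := hn
  obtain ⟨s, hs⟩ := hodd
  have hii' : i < (⟨(i : ℕ) + 1, hi⟩ : Fin r) := by rw [Fin.lt_def]; simp
  have hpq : a ⟨(i : ℕ) + 1, hi⟩ < a i := hanti hii'
  set p := a ⟨(i : ℕ) + 1, hi⟩ with hp
  set q := a i with hq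
  -- the candidate n'
  set n'0 : ℕ → ℕ := fun j => if j = 0 then (r - 3) / 2
    else (Finset.univ.filter fun k : Fin (r - 2) => j ≤ a (emb i hi k)).card with hn'0def
  have heq0 : ∀ j : ℕ,
      n j = n'0 j + (if p < j ∧ j ≤ q then 1 else 0)
        + (if 1 ≤ j ∧ j ≤ p then 2 else 0) + (if j = 0 then 1 else 0) := by
    intro j
    rcases Nat.eq_zero_or_pos j with rfl | hj
    · have h1 : n'0 0 = (r - 3) / 2 := by simp [hn'0def]
      rw [h0, h1, if_neg (by omega), if_neg (by omega), if_pos rfl]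
      omega
    · have h1 := hcount j hj
      have h2 := split_card a i hi (fun x => j ≤ x)
      have h3 : n'0 j = (Finset.univ.filter fun k : Fin (r - 2) => j ≤ a (emb i hi k)).card := by
        simp [hn'0def]; omega
      rw [h1, h2, h3, ← hp, ← hq]
      split_ifs <;> omega
  constructor
  · -- existence and uniqueness
    refine ⟨n'0, heq0, ?_⟩
    intro y hy
    funext j
    have := hy j
    have := heq0 j
    omega
  · intro n' heq
    have hkey : ∀ j, n' j = n'0 j := by
      intro j
      have := heq j
      have := heq0 j
      omega
    have hn'0 : n' 0 = (r - 3) / 2 := by rw [hkey 0]; simp [hn'0def]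
    have hn'j : ∀ j, 1 ≤ j →
        n' j = (Finset.univ.filter fun k : Fin (r - 2) => j ≤ a (emb i hi k)).card := by
      intro j hj
      rw [hkey j]
      simp [hn'0def]
      omega
    have hinj' : Function.Injective fun k : Fin (r - 2) => a (emb i hi k) :=
      hanti.injective.comp (emb_strictMono i hi).injective
    constructor
    · -- residual data for n'
      refine ⟨fun k => a (emb i hi k), ⟨⟨s - 1, by omega⟩, ?_, hn'j, ?_⟩, ?_⟩
      · intro k l h
        exact hanti (emb_strictMono i hi h)
      · rw [hn'0]
        omega
      · ext x
        simp only [Set.mem_range, Set.mem_diff, Set.mem_insert_iff, Set.mem_singleton_iff]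
        constructor
        · rintro ⟨k, rfl⟩
          have hne := emb_ne i hi k
          refine ⟨⟨emb i hi k, rfl⟩, ?_⟩
          rintro (h | h)
          · exact hne.1 (congrArg Fin.val (hanti.injective h))
          · exact hne.2 (congrArg Fin.val (hanti.injective h))
        · rintro ⟨⟨k, rfl⟩, hne⟩
          have h1 : k ≠ i := fun h => hne (Or.inl (congrArg a h))
          have h2 : k ≠ ⟨(i : ℕ) + 1, hi⟩ := fun h => hne (Or.inr (congrArg a h))
          obtain ⟨k', hk'⟩ := emb_surj i hi k h1 h2
          exact ⟨k', by rw [hk']⟩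
    · -- no further withdrawal
      intro c
      rintro ⟨m, ⟨r'', b, hodd'', hanti'', hcount'', h0''⟩, heqm⟩
      obtain ⟨t, ht⟩ := hodd''
      rcases Nat.eq_zero_or_pos c with rfl | hc
      · -- c = 0
        have e0 := heqm 0
        rw [if_neg (by omega), if_pos rfl] at e0
        have e1 := heqm 1
        rw [if_neg (by omega), if_neg (by omega)] at e1
        have hm1 : m 1 = (Finset.univ.filter fun k : Fin r'' => 1 ≤ b k).card :=
          hcount'' 1 le_rfl
        have hB : m 1 ≤ r'' := by
          rw [hm1]
          calc (Finset.univ.filter fun k : Fin r'' => 1 ≤ b k).card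
              ≤ (Finset.univ : Finset (Fin r'')).card := Finset.card_filter_le _ _
            _ = r'' := by simp
        have hzero : (Finset.univ.filter fun k : Fin (r - 2) => ¬ 1 ≤ a (emb i hi k)).card ≤ 1 := by
          refine Finset.card_le_one.mpr ?_
          intro k hk l hl
          simp only [Finset.mem_filter, Finset.mem_univ, true_and] at hk hl
          exact hinj' (show a (emb i hi k) = a (emb i hi l) by omega)
        have hsum := Finset.card_filter_add_card_filter_not
          (s := (Finset.univ : Finset (Fin (r - 2))))
          (p := fun k : Fin (r - 2) => 1 ≤ a (emb i hi k))
        have hcardu : (Finset.univ : Finset (Fin (r - 2))).card = r - 2 := by simp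
        have hA := hn'j 1 le_rfl
        omega
      · -- c ≥ 1
        have e1 := heqm c
        rw [if_pos ⟨hc, le_rfl⟩, if_neg (by omega)] at e1
        have e2 := heqm (c + 1)
        rw [if_neg (by omega), if_neg (by omega)] at e2
        have hm1 : m c = (Finset.univ.filter fun k : Fin r'' => c ≤ b k).card := hcount'' c hc
        have hm2 : m (c + 1) = (Finset.univ.filter fun k : Fin r'' => c + 1 ≤ b k).card :=
          hcount'' (c + 1) (by omega)
        have hmono : (Finset.univ.filter fun k : Fin r'' => c + 1 ≤ b k).card
            ≤ (Finset.univ.filter fun k : Fin r'' => c ≤ b k).card := by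
          apply Finset.card_le_card
          intro k hk
          simp only [Finset.mem_filter, Finset.mem_univ, true_and] at *
          omega
        have hup := card_le_succ (fun k : Fin (r - 2) => a (emb i hi k)) hinj' c
        have hc1 := hn'j c hc
        have hc2 := hn'j (c + 1) (by omega)
        omega
end

section
/- Let n be a residual segment of type B with Jumps a_1 > … > a_r. Let 𝔞, 𝔟 ∈ ℤ with 𝔞 > 𝔟 and 𝔞 + 𝔟 > 0, and suppose there exists a residual segment m of type B such that n(j) = m(j) + #{k ∈ ℤ : 𝔟 ≤ k ≤ 𝔞 and |k| = j} for every j ∈ ℕ (i.e. withdrawing the linear segment (𝔞, 𝔞−1, …, 𝔟) from n leaves a residual segment of type B; equivalently, the vector formed by the segment (𝔞, …, 𝔟) followed by the entries of m lies in the type-B Weyl group orbit of the dominant point attached to n). Then 𝔞 is a Jump of n, i.e. 𝔞 ∈ {a_1, …, a_r}; and if moreover some Jump of n is strictly smaller than 𝔞, then 𝔟 ≥ −a_−, where a_− denotes the largest Jump of n strictly smaller than 𝔞. -/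
/-- If withdrawing the linear segment `(𝔞, 𝔞-1, …, 𝔟)` (with `𝔞 > 𝔟`
and `𝔞 + 𝔟 > 0`) from a type-B residual segment `n` with Jumps `a 0 > … > a (r-1)`
leaves a residual segment of type B, then `𝔞` is a Jump of `n`; and if some Jump of `n`
is strictly smaller than `𝔞` — i.e. the witnessing index `i` satisfies `i + 1 < r` —
then `𝔟 ≥ -a (i+1)`, where `a (i+1)` is the largest Jump strictly smaller than `𝔞`. -/
theorem statement10 (n : ℕ → ℕ) (r : ℕ) (a : Fin r → ℕ)
    (hn : ResidualBData n r a)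
    (𝔞 𝔟 : ℤ) (hab : 𝔟 < 𝔞) (hab' : 0 < 𝔞 + 𝔟)
    (h : ∃ m : ℕ → ℕ, IsResidualSegmentB m ∧
      ∀ j : ℕ, n j = m j + ((Finset.Icc 𝔟 𝔞).filter fun k => k.natAbs = j).card) :
    ∃ i : Fin r, (a i : ℤ) = 𝔞 ∧
      ∀ hi : (i : ℕ) + 1 < r, -(a ⟨(i : ℕ) + 1, hi⟩ : ℤ) ≤ 𝔟 := by
  obtain ⟨-, ha, hA, -⟩ := hn
  obtain ⟨m, ⟨s, b, -, -, hmB, -⟩, hm⟩ := h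
  set A := 𝔞.toNat with hAdef
  have hAc : (A : ℤ) = 𝔞 := Int.toNat_of_nonneg (by omega)
  have hA1 : 1 ≤ A := by omega
  have hmono : ∀ {j j' : ℕ}, 1 ≤ j → j ≤ j' → m j' ≤ m j := by
    intro j j' hj hjj
    rw [hmB j hj, hmB j' (le_trans hj hjj)]
    refine Finset.card_le_card ?_
    intro k hk
    simp only [Finset.mem_filter, Finset.mem_univ, true_and] at *
    omega
  have hcA : ((Finset.Icc 𝔟 𝔞).filter fun k => k.natAbs = A) = {𝔞} := by
    ext k
    simp only [Finset.mem_filter, Finset.mem_Icc, Finset.mem_singleton]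
    omega
  have hcA1 : ((Finset.Icc 𝔟 𝔞).filter fun k => k.natAbs = A + 1) = ∅ := by
    ext k
    simp only [Finset.mem_filter, Finset.mem_Icc, Finset.notMem_empty, iff_false, not_and]
    omega
  have hnA : n A = m A + 1 := by rw [hm A, hcA, Finset.card_singleton]
  have hnA1 : n (A + 1) = m (A + 1) := by rw [hm (A + 1), hcA1, Finset.card_empty, add_zero]
  have hlt : n (A + 1) < n A := by have := hmono hA1 (show A ≤ A + 1 by omega); omega
  rw [hA A hA1, hA (A + 1) (by omega)] at hlt
  have hss : (Finset.univ.filter fun i : Fin r => A + 1 ≤ a i) ⊂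
      (Finset.univ.filter fun i : Fin r => A ≤ a i) := by
    refine Finset.ssubset_iff_subset_ne.mpr ⟨?_, ?_⟩
    · intro k hk
      simp only [Finset.mem_filter, Finset.mem_univ, true_and] at *
      omega
    · intro he; rw [he] at hlt; exact lt_irrefl _ hlt
  obtain ⟨i, himem, hinot⟩ := Finset.exists_of_ssubset hss
  simp only [Finset.mem_filter, Finset.mem_univ, true_and] at himem hinot
  have hai : a i = A := by omega
  refine ⟨i, by rw [hai, hAc], ?_⟩
  intro hi
  by_contra hcon
  push_neg at hcon
  set i' : Fin r := ⟨(i : ℕ) + 1, hi⟩ with hi'def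
  have hii' : i < i' := by simp [hi'def, Fin.lt_def]
  have hlt' : a i' < a i := ha hii'
  set t := a i' + 1 with htdef
  have htA : t ≤ A := by omega
  have hfeq : (Finset.univ.filter fun k : Fin r => t ≤ a k) =
      (Finset.univ.filter fun k : Fin r => A ≤ a k) := by
    ext k
    simp only [Finset.mem_filter, Finset.mem_univ, true_and]
    constructor
    · intro hk
      have h1 : a i' < a k := by omega
      have h2 : k < i' := ha.lt_iff_gt.mp h1
      have h3 : k ≤ i := by
        rw [Fin.le_def]
        have := Fin.lt_def.mp h2
        simp [hi'def] at this
        omega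
      have := ha.le_iff_ge.mpr h3
      omega
    · intro hk; omega
  have hnt : n t = n A := by rw [hA t (by omega), hA A hA1, hfeq]
  have hct : 2 ≤ ((Finset.Icc 𝔟 𝔞).filter fun k => k.natAbs = t).card := by
    have hsub : ({(t : ℤ), -(t : ℤ)} : Finset ℤ) ⊆
        (Finset.Icc 𝔟 𝔞).filter fun k => k.natAbs = t := by
      intro k hk
      simp only [Finset.mem_insert, Finset.mem_singleton] at hk
      simp only [Finset.mem_filter, Finset.mem_Icc]
      rcases hk with h | h <;> subst h <;> refine ⟨⟨?_, ?_⟩, ?_⟩ <;> omega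
    calc 2 = ({(t : ℤ), -(t : ℤ)} : Finset ℤ).card :=
          (Finset.card_pair (by omega)).symm
      _ ≤ _ := Finset.card_le_card hsub
  have h1 := hm t
  have h2 := hmono (show 1 ≤ t by omega) htA
  omega
end

section
/- Let n be a residual segment of type B. Then there do not exist an integer s ≥ 1 and natural numbers c_1, …, c_s ≥ 0 such that n(0) = s and n(j) = 2 · #{k : c_k ≥ j} for every j ≥ 1. Equivalently, the multiset attached to a type-B residual segment is never the disjoint union of the absolute-value multisets of finitely many symmetric linear segments (c_k, c_k − 1, …, 0, …, −c_k); so a vector obtained by concatenating symmetric linear segments never lies in the type-B Weyl group orbit of the dominant point attached to a residual segment. -/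
/-- The multiset attached to a type-B residual segment is never the
disjoint union of the absolute-value multisets of finitely many symmetric linear segments
`(c k, c k - 1, …, -c k)`: there are no `s ≥ 1` and `c : Fin s → ℕ` with `n 0 = s` and
`n j = 2 · #{k : c k ≥ j}` for every `j ≥ 1`. -/
theorem statement11 (n : ℕ → ℕ) (hn : IsResidualSegmentB n) :
    ¬ ∃ (s : ℕ) (c : Fin s → ℕ), 1 ≤ s ∧ n 0 = s ∧
      ∀ j : ℕ, 1 ≤ j →
        n j = 2 * (Finset.univ.filter fun k : Fin s => j ≤ c k).card := by
  rintro ⟨s, c, hs, h0, hc⟩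
  obtain ⟨r, a, hodd, hanti, hn1, hn0⟩ := hn
  -- r ≥ 3
  have hr3 : 3 ≤ r := by
    have h1 : 1 ≤ (r - 1) / 2 := by rw [← hn0, h0]; exact hs
    omega
  have h0r : (0 : ℕ) < r := by omega
  have h1r : (1 : ℕ) < r := by omega
  set i0 : Fin r := ⟨0, h0r⟩
  set i1 : Fin r := ⟨1, h1r⟩
  have ha0pos : 1 ≤ a i0 := by
    have := hanti (show i0 < i1 from by simp [i0, i1, Fin.lt_def])
    omega
  have hfilter : (Finset.univ.filter fun i : Fin r => a i0 ≤ a i) = {i0} := by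
    ext i
    simp only [Finset.mem_filter, Finset.mem_univ, true_and, Finset.mem_singleton]
    constructor
    · intro h
      by_contra hne
      have hlt : i0 < i := by
        rcases lt_or_gt_of_ne (Ne.symm hne) with h' | h'
        · exact h'
        · exact absurd (Fin.lt_def.mp h') (by simp [i0])
      exact absurd (hanti hlt) (not_lt.mpr h)
    · rintro rfl; exact le_rfl
  have hone : n (a i0) = 1 := by rw [hn1 _ ha0pos, hfilter, Finset.card_singleton]
  have heven := hc (a i0) ha0pos
  omega
end
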